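/- arXiv:2206.00995 — 9 statements merged into one kernel-verified Lean document; each statement's English description precedes it below -/
import Mathlib

section
/- Any aperiodic right-infinite word over a finite alphabet has factor complexity at least n+1 for every n ≥ 0 (Morse–Hedlund). -/
/-- `u` is a factor of the right-infinite word `w`. -/
def IsFactor {α : Type*} (w : ℕ → α) (u : List α) : Prop :=
  ∃ i : ℕ, u = (List.range u.length).map fun j => w (i + j)

/-- Factor complexity: the number of factors of `w` of length `n`. -/
noncomputable def factorComplexity {α : Type*} (w : ℕ → α) (n : ℕ) : ℕ :=
  Set.ncard {u : List α | u.length = n ∧ IsFactor w u}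

/-- The conjugacy (rotation) class of a finite word. -/
def conjClass {α : Type*} (u : List α) : Set (List α) :=
  {v | ∃ i : ℕ, v = u.rotate i}

/-- Lie complexity: the number of conjugacy classes of words of length `n`
all of whose elements are factors of `w`. -/
noncomputable def lieComplexity {α : Type*} (w : ℕ → α) (n : ℕ) : ℕ :=
  Set.ncard {C : Set (List α) | ∃ u : List α, u.length = n ∧
    (∀ i : ℕ, IsFactor w (u.rotate i)) ∧ C = conjClass u}

/-- `w` is eventually periodic. -/
def EventuallyPeriodic {α : Type*} (w : ℕ → α) : Prop :=
  ∃ p : ℕ, 1 ≤ p ∧ ∃ N : ℕ, ∀ i : ℕ, N ≤ i → w (i + p) = w i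

set_option linter.unusedSectionVars false

namespace MHaux
variable {α : Type*} [Fintype α]

/-- The length-`n` window of `w` starting at `i`. -/
def F (w : ℕ → α) (n i : ℕ) : List α := (List.range n).map fun j => w (i + j)

lemma F_length (w : ℕ → α) (n i : ℕ) : (F w n i).length = n := by simp [F]

lemma factors_eq (w : ℕ → α) (n : ℕ) :
    {u : List α | u.length = n ∧ IsFactor w u} = Set.range (F w n) := by
  ext u
  constructor
  · rintro ⟨hl, i, hi⟩
    exact ⟨i, by rw [hi, hl]; rfl⟩
  · rintro ⟨i, rfl⟩
    refine ⟨F_length w n i, i, ?_⟩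
    rw [F_length]
    rfl

lemma compl_eq (w : ℕ → α) (n : ℕ) :
    factorComplexity w n = (Set.range (F w n)).ncard := by
  rw [factorComplexity, factors_eq]

lemma range_finite (w : ℕ → α) (n : ℕ) : (Set.range (F w n)).Finite :=
  (List.finite_length_eq α n).subset (by rintro _ ⟨i, rfl⟩; exact F_length w n i)

lemma F_succ (w : ℕ → α) (n i : ℕ) : F w (n+1) i = F w n i ++ [w (i+n)] := by
  simp [F, List.range_succ]

lemma F_take (w : ℕ → α) (n i : ℕ) : (F w (n+1) i).take n = F w n i := by
  simp [F, ← List.map_take, List.take_range]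

lemma range_eq_image (w : ℕ → α) (n : ℕ) :
    Set.range (F w n) = (fun l : List α => l.take n) '' Set.range (F w (n+1)) := by
  ext u
  constructor
  · rintro ⟨i, rfl⟩; exact ⟨F w (n+1) i, ⟨i, rfl⟩, F_take w n i⟩
  · rintro ⟨v, ⟨i, rfl⟩, rfl⟩; exact ⟨i, (F_take w n i).symm⟩

lemma mono (w : ℕ → α) (n : ℕ) : factorComplexity w n ≤ factorComplexity w (n+1) := by
  rw [compl_eq, compl_eq, range_eq_image]
  exact Set.ncard_image_le (range_finite w (n+1))

lemma compl_zero (w : ℕ → α) : factorComplexity w 0 = 1 := by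
  rw [compl_eq]
  have : Set.range (F w 0) = {([] : List α)} := by
    ext u; simp [F]
  rw [this, Set.ncard_singleton]

/-- If the complexity stalls at `m`, then each length-`m` window determines
the next letter. -/
lemma ext_unique (w : ℕ → α) {m : ℕ}
    (h : factorComplexity w (m+1) ≤ factorComplexity w m)
    {i j : ℕ} (hij : F w m i = F w m j) : w (i + m) = w (j + m) := by
  have hfin := range_finite w (m+1)
  have h1 : ((fun l : List α => l.take m) '' Set.range (F w (m+1))).ncard
      = (Set.range (F w (m+1))).ncard := by
    rw [← range_eq_image]
    have le1 := mono w m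
    rw [compl_eq, compl_eq] at le1 h
    omega
  have hinj := Set.injOn_of_ncard_image_eq h1 hfin
  have heq : F w (m+1) i = F w (m+1) j := by
    refine hinj ⟨i, rfl⟩ ⟨j, rfl⟩ ?_
    simp only [F_take, hij]
  rw [F_succ, F_succ, hij] at heq
  have := List.append_cancel_left heq
  simpa using this

end MHaux

open MHaux in
/-- Morse–Hedlund: an aperiodic right-infinite word over a finite alphabet has
factor complexity at least `n + 1` for every `n`. -/
theorem morse_hedlund {α : Type*} [Fintype α] (w : ℕ → α)
    (hw : ¬ EventuallyPeriodic w) : ∀ n : ℕ, n + 1 ≤ factorComplexity w n := by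
  by_contra hcon
  push_neg at hcon
  obtain ⟨n, hn⟩ := hcon
  obtain ⟨m, hm⟩ : ∃ m, factorComplexity w (m+1) ≤ factorComplexity w m := by
    by_contra hall
    push_neg at hall
    have hgrow : ∀ k, k + 1 ≤ factorComplexity w k := by
      intro k
      induction k with
      | zero => simp [compl_zero]
      | succ k ih => have := hall k; omega
    exact absurd (hgrow n) (by omega)
  -- pigeonhole: two equal length-`m` windows
  obtain ⟨i, j, hlt, hij⟩ : ∃ i j, i < j ∧ F w m i = F w m j := by
    have hfin := (range_finite w m).to_subtype
    obtain ⟨x, y, hxy, hfeq⟩ := Finite.exists_ne_map_eq_of_infinite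
      (fun i : ℕ => (⟨F w m i, ⟨i, rfl⟩⟩ : Set.range (F w m)))
    have hfeq' : F w m x = F w m y := congrArg Subtype.val hfeq
    rcases lt_or_gt_of_ne hxy with h | h
    · exact ⟨x, y, h, hfeq'⟩
    · exact ⟨y, x, h, hfeq'.symm⟩
  have key : ∀ d, F w m (i + d) = F w m (j + d) := by
    intro d
    induction d with
    | zero => simpa using hij
    | succ d ih =>
      have hw' : w (i + d + m) = w (j + d + m) := ext_unique w hm ih
      have ih' : ∀ t ∈ List.range m, w (i + d + t) = w (j + d + t) := by
        rw [← List.map_eq_map_iff]; exact ih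
      show (List.range m).map (fun t => w (i + (d+1) + t))
          = (List.range m).map (fun t => w (j + (d+1) + t))
      rw [List.map_eq_map_iff]
      intro t ht
      rw [List.mem_range] at ht
      rcases Nat.lt_or_ge (t+1) m with h1 | h1
      · have := ih' (t+1) (List.mem_range.mpr h1)
        have e1 : i + (d+1) + t = i + d + (t+1) := by omega
        have e2 : j + (d+1) + t = j + d + (t+1) := by omega
        rw [e1, e2]; exact this
      · have ht1 : t + 1 = m := by omega
        have e1 : i + (d+1) + t = i + d + m := by omega
        have e2 : j + (d+1) + t = j + d + m := by omega
        rw [e1, e2]; exact hw'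
  refine hw ⟨j - i, by omega, i + m, fun k hk => ?_⟩
  have hd := ext_unique w hm (key (k - i - m))
  have e1 : i + (k - i - m) + m = k := by omega
  have e2 : j + (k - i - m) + m = k + (j - i) := by omega
  rw [e1, e2] at hd
  exact hd.symm
end

section
/- For every right-infinite word w over a finite alphabet and every n ≥ 1, the Lie complexity satisfies L_w(n) ≤ p_w(n) − p_w(n−1) + 1. -/
namespace BS

variable {α : Type*}

/-- The factor of `w` of length `m` starting at position `i`. -/
def fac (w : ℕ → α) (i m : ℕ) : List α := (List.range m).map fun j => w (i + j)

@[simp] lemma fac_length (w : ℕ → α) (i m : ℕ) : (fac w i m).length = m := by simp [fac]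

lemma isFactor_fac (w : ℕ → α) (i m : ℕ) : IsFactor w (fac w i m) :=
  ⟨i, by rw [fac_length]; rfl⟩

lemma isFactor_iff {w : ℕ → α} {u : List α} : IsFactor w u ↔ ∃ i, u = fac w i u.length :=
  Iff.rfl

lemma fac_succ (w : ℕ → α) (i m : ℕ) : fac w i (m + 1) = w i :: fac w (i + 1) m := by
  simp only [fac, List.range_succ_eq_map, List.map_cons, List.map_map]
  congr 1
  apply List.map_congr_left
  intro a _
  simp only [Function.comp_apply, Nat.succ_eq_add_one]
  congr 1
  omega

lemma fac_take (w : ℕ → α) (i m M : ℕ) (h : m ≤ M) : (fac w i M).take m = fac w i m := by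
  simp [fac, ← List.map_take, List.take_range, Nat.min_eq_left h]

lemma fac_drop_one (w : ℕ → α) (i m : ℕ) : (fac w i (m + 1)).drop 1 = fac w (i + 1) m := by
  rw [fac_succ]; rfl

/-- first occurrence of a factor -/
noncomputable def fo (w : ℕ → α) (x : List α) : ℕ := sInf {i | x = fac w i x.length}

lemma fo_spec {w : ℕ → α} {x : List α} (h : IsFactor w x) : x = fac w (fo w x) x.length :=
  Nat.sInf_mem (h : ∃ i, x = fac w i x.length)

lemma fo_le {w : ℕ → α} {x : List α} {i : ℕ} (h : x = fac w i x.length) : fo w x ≤ i :=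
  Nat.sInf_le h

lemma conjClass_eq_of_mem {u v : List α} (h : v ∈ conjClass u) : conjClass v = conjClass u := by
  obtain ⟨i, rfl⟩ := h
  rcases eq_or_ne u [] with rfl | hne
  · simp [conjClass]
  have hlen : 0 < u.length := List.length_pos_iff.2 hne
  have hk : (u.rotate i).rotate (u.length - i % u.length) = u := by
    rw [List.rotate_rotate]
    have h1 : u.length * (i / u.length) + i % u.length = i := Nat.div_add_mod i u.length
    have h2 : i % u.length < u.length := Nat.mod_lt _ hlen
    have : i + (u.length - i % u.length) = u.length * (i / u.length + 1) := by
      rw [Nat.mul_add, Nat.mul_one]; omega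
    rw [this, List.rotate_length_mul]
  ext v
  constructor
  · rintro ⟨j, rfl⟩
    exact ⟨i + j, by rw [List.rotate_rotate]⟩
  · rintro ⟨j, rfl⟩
    refine ⟨(u.length - i % u.length) + j, ?_⟩
    rw [← List.rotate_rotate, hk]

end BS

namespace BS

lemma rotate_one_take {l : List α} (hl : l ≠ []) :
    (l.rotate 1).take (l.length - 1) = l.drop 1 := by
  cases l with
  | nil => exact absurd rfl hl
  | cons a t =>
    rw [List.rotate_cons_succ, List.rotate_zero]
    simp [List.take_left]

lemma rotate_drop_take {u : List α} {m : ℕ} (hlen : u.length = m + 1) (j : ℕ) :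
    (u.rotate (j + 1)).take m = (u.rotate j).drop 1 := by
  have h1 : u.rotate (j + 1) = (u.rotate j).rotate 1 := by
    rw [List.rotate_rotate]
  have h2 : (u.rotate j).length = m + 1 := by simp [hlen]
  have h3 : u.rotate j ≠ [] := by
    intro h
    rw [h] at h2
    simp at h2
  rw [h1, ← show (u.rotate j).length - 1 = m from by omega, rotate_one_take h3]

end BS

/-- Bell–Shallit: the Lie complexity is bounded by the first difference of the
factor complexity plus one. -/
theorem lieComplexity_le {α : Type*} [Fintype α] (w : ℕ → α) (n : ℕ) (hn : 1 ≤ n) :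
    lieComplexity w n ≤ factorComplexity w n - factorComplexity w (n - 1) + 1 := by
  classical
  obtain ⟨m, rfl⟩ : ∃ m, n = m + 1 := ⟨n - 1, by omega⟩
  simp only [Nat.add_sub_cancel]
  set Fm : Set (List α) := {u : List α | u.length = m ∧ IsFactor w u} with hFm
  set Fn : Set (List α) := {u : List α | u.length = m + 1 ∧ IsFactor w u} with hFn
  have hFmfin : Fm.Finite := (List.finite_length_eq α m).subset (fun u hu => hu.1)
  have hFnfin : Fn.Finite := (List.finite_length_eq α (m + 1)).subset (fun u hu => hu.1)
  set x0 : List α := BS.fac w 0 m with hx0def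
  have hx0 : x0 ∈ Fm := ⟨BS.fac_length w 0 m, BS.isFactor_fac w 0 m⟩
  set V' : Set (List α) := Fm \ {x0} with hV'
  set T : List α → List α := fun x => BS.fac w (BS.fo w x - 1) (m + 1) with hT
  have hfo_pos : ∀ x ∈ V', 1 ≤ BS.fo w x := by
    rintro x ⟨⟨hlen, hfac⟩, hne⟩
    by_contra h
    have h0 : BS.fo w x = 0 := by omega
    apply hne
    have hs := BS.fo_spec hfac
    rw [h0, hlen] at hs
    simpa [hx0def] using hs
  have hTdrop : ∀ x ∈ V', (T x).drop 1 = x := by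
    intro x hx
    have h1 := hfo_pos x hx
    obtain ⟨⟨hlen, hfac⟩, -⟩ := hx
    have h2 : BS.fo w x - 1 + 1 = BS.fo w x := by omega
    rw [hT]
    simp only
    rw [BS.fac_drop_one, h2]
    conv_rhs => rw [BS.fo_spec hfac, hlen]
  have hTinj : Set.InjOn T V' := fun x hx y hy h => by
    rw [← hTdrop x hx, ← hTdrop y hy, h]
  have hTsub : T '' V' ⊆ Fn := by
    rintro e ⟨x, _, rfl⟩
    exact ⟨BS.fac_length _ _ _, BS.isFactor_fac _ _ _⟩
  have hgood : ∀ u : List α, u.length = m + 1 → (∀ i, IsFactor w (u.rotate i)) →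
      ∃ e, e ∈ conjClass u ∧ e ∈ Fn \ T '' V' := by
    intro u hlen hrot
    by_contra hcon
    push_neg at hcon
    have hall : ∀ j : ℕ, u.rotate j ∈ T '' V' := by
      intro j
      have h1 : u.rotate j ∈ conjClass u := ⟨j, rfl⟩
      have h2 : u.rotate j ∈ Fn := ⟨by simp [hlen], hrot j⟩
      have := hcon (u.rotate j) h1
      by_contra hnot
      exact this ⟨h2, hnot⟩
    set g : ℕ → ℕ := fun j => BS.fo w ((u.rotate j).take m) with hg
    have hstep : ∀ j, g j < g (j + 1) := by
      intro j
      obtain ⟨x, hx, hTx⟩ := hall j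
      have hfo1 := hfo_pos x hx
      have htake : (u.rotate j).take m = BS.fac w (BS.fo w x - 1) m := by
        rw [← hTx, hT]
        exact BS.fac_take w _ m (m + 1) (by omega)
      have hdrop : (u.rotate (j + 1)).take m = x := by
        rw [BS.rotate_drop_take hlen j, ← hTx]
        exact hTdrop x hx
      have hle : BS.fo w (BS.fac w (BS.fo w x - 1) m) ≤ BS.fo w x - 1 :=
        BS.fo_le (by rw [BS.fac_length])
      calc g j = BS.fo w (BS.fac w (BS.fo w x - 1) m) := by rw [hg]; simp only; rw [htake]
        _ ≤ BS.fo w x - 1 := hle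
        _ < BS.fo w x := by omega
        _ = g (j + 1) := by rw [hg]; simp only; rw [hdrop]
    have hmono := strictMono_nat_of_lt_succ hstep
    have hlt : g 0 < g (m + 1) := hmono (by omega)
    have heq : u.rotate (m + 1) = u.rotate 0 := by
      rw [List.rotate_zero, ← hlen, List.rotate_length]
    rw [hg] at hlt
    simp only [heq] at hlt
    exact lt_irrefl _ hlt
  set S : Set (Set (List α)) := {C : Set (List α) | ∃ u : List α, u.length = m + 1 ∧
    (∀ i : ℕ, IsFactor w (u.rotate i)) ∧ C = conjClass u} with hS
  set f : Set (List α) → List α := fun C =>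
    if h : ∃ e, e ∈ C ∧ e ∈ Fn \ T '' V' then h.choose else [] with hf
  have hfspec : ∀ C ∈ S, f C ∈ C ∧ f C ∈ Fn \ T '' V' := by
    rintro C ⟨u, hlen, hrot, rfl⟩
    have hex : ∃ e, e ∈ conjClass u ∧ e ∈ Fn \ T '' V' := hgood u hlen hrot
    rw [hf]
    simp only [dif_pos hex]
    exact hex.choose_spec
  have hinj : Set.InjOn f S := by
    intro C₁ h₁ C₂ h₂ hfe
    obtain ⟨u₁, _, _, rfl⟩ := h₁
    obtain ⟨u₂, _, _, rfl⟩ := h₂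
    have m₁ : f (conjClass u₁) ∈ conjClass u₁ := (hfspec _ ⟨u₁, ‹_›, ‹_›, rfl⟩).1
    have m₂ : f (conjClass u₂) ∈ conjClass u₂ := (hfspec _ ⟨u₂, ‹_›, ‹_›, rfl⟩).1
    rw [hfe] at m₁
    exact (BS.conjClass_eq_of_mem m₁).symm.trans (BS.conjClass_eq_of_mem m₂)
  have htfin : (Fn \ T '' V').Finite := hFnfin.subset Set.diff_subset
  have hcard : S.ncard ≤ (Fn \ T '' V').ncard :=
    Set.ncard_le_ncard_of_injOn f (fun C hC => (hfspec C hC).2) hinj htfin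
  have hTVfin : (T '' V').Finite := hFnfin.subset hTsub
  have h1 : (Fn \ T '' V').ncard = Fn.ncard - (T '' V').ncard := Set.ncard_diff hTsub hTVfin
  have h2 : (T '' V').ncard = V'.ncard := Set.ncard_image_of_injOn hTinj
  have h3 : V'.ncard = Fm.ncard - 1 := Set.ncard_diff_singleton_of_mem hx0
  have h4 : 0 < Fm.ncard := (Set.ncard_pos hFmfin).2 ⟨x0, hx0⟩
  have h5 : (T '' V').ncard ≤ Fn.ncard := Set.ncard_le_ncard hTsub hFnfin
  have hL : lieComplexity w (m + 1) = S.ncard := rfl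
  have hpn : factorComplexity w (m + 1) = Fn.ncard := rfl
  have hpm : factorComplexity w m = Fm.ncard := rfl
  rw [hL, hpn, hpm]
  omega
end

section
/- If w is a right-infinite word with linear factor complexity (p_w(n) ≤ Cn + C for some constant C and all n), then the Lie complexity L_w is uniformly bounded. -/
namespace LieAux
variable {α : Type*}

/-- The window (factor occurrence) of `w` of length `ℓ` starting at `i`. -/
def seg (w : ℕ → α) (i ℓ : ℕ) : List α := (List.range ℓ).map fun k => w (i + k)

@[simp] lemma length_seg (w : ℕ → α) (i ℓ : ℕ) : (seg w i ℓ).length = ℓ := by simp [seg]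

@[simp] lemma getElem_seg (w : ℕ → α) (i ℓ k : ℕ) (h : k < (seg w i ℓ).length) :
    (seg w i ℓ)[k] = w (i + k) := by simp [seg]

lemma seg_succ (w : ℕ → α) (i ℓ : ℕ) : seg w i (ℓ+1) = seg w i ℓ ++ [w (i+ℓ)] := by
  simp [seg, List.range_succ]

lemma isFactor_seg (w : ℕ → α) (i ℓ : ℕ) : IsFactor w (seg w i ℓ) := ⟨i, by simp [seg]⟩

lemma eq_seg_of_isFactor {w : ℕ → α} {u : List α} (h : IsFactor w u) :
    ∃ i, u = seg w i u.length := h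

end LieAux

namespace LieAux

lemma mem_conjClass_self (u : List α) : u ∈ conjClass u := ⟨0, (u.rotate_zero).symm⟩

lemma conjClass_rotate (u : List α) (a : ℕ) : conjClass (u.rotate a) = conjClass u := by
  rcases List.eq_nil_or_concat u with rfl | _
  · simp [conjClass, List.rotate_nil]
  · have hlen : 0 < u.length := by
      rcases u with _ | _
      · simp_all
      · simp
    ext v
    constructor
    · rintro ⟨b, rfl⟩
      exact ⟨a + b, by rw [List.rotate_rotate]⟩
    · rintro ⟨b, rfl⟩
      refine ⟨(u.length - a % u.length) + b, ?_⟩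
      rw [List.rotate_rotate]
      have h1 : a % u.length < u.length := Nat.mod_lt _ hlen
      have h2 : a % u.length + u.length * (a / u.length) = a := Nat.mod_add_div a u.length
      have h4 : u.length * (a / u.length + 1) = u.length * (a / u.length) + u.length := by
        ring
      have h3 : a + (u.length - a % u.length + b) = u.length * (a / u.length + 1) + b := by
        omega
      rw [h3]
      conv_rhs => rw [← List.rotate_mod, Nat.mul_add_mod, List.rotate_mod]

lemma conjClass_eq_of_mem {u v : List α} (h : v ∈ conjClass u) :
    conjClass v = conjClass u := by
  rcases h with ⟨a, rfl⟩; exact conjClass_rotate u a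

lemma finite_len (m : ℕ) [Finite α] : {l : List α | l.length = m}.Finite := by
  have : {l : List α | l.length = m} ⊆ Set.range (List.ofFn : (Fin m → α) → List α) := by
    intro l hl
    have hm : l.length = m := hl
    refine ⟨fun k => l[(k : ℕ)]'(k.2.trans_eq hm.symm), ?_⟩
    apply List.ext_getElem (by simp [hm])
    intro i h1 h2
    simp
  exact (Set.finite_range _).subset this

end LieAux

namespace LieAux

/-- Weak Fine–Wilf: two periods `p ≤ q` on a window of length `L ≥ p + q` force
period `gcd p q` (with some slack at the end). -/
lemma fine_wilf {α : Type*} (y : ℕ → α) :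
    ∀ q p L : ℕ, 0 < p → p ≤ q → p + q ≤ L →
    (∀ k, k + p < L → y (k + p) = y k) → (∀ k, k + q < L → y (k + q) = y k) →
    ∀ k, k + (p + q - Nat.gcd p q) < L → y (k + Nat.gcd p q) = y k := by
  intro q
  induction q using Nat.strong_induction_on with
  | _ q ih =>
    intro p L hp hpq hL hyp hyq k hk
    rcases eq_or_lt_of_le hpq with rfl | hlt
    · have hg : Nat.gcd p p = p := Nat.gcd_self p
      rw [hg]
      exact hyp k (by omega)
    · set r := q - p with hr
      have hr1 : 0 < r := by omega
      have hq : q = r + p := by omega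
      have hgcd : Nat.gcd p r = Nat.gcd p q := by
        rw [hq, Nat.gcd_add_self_right]
      -- both p and r are periods on [0, L - p)
      have hyr : ∀ k, k + r < L - p → y (k + r) = y k := by
        intro k hk
        have h1 : y (k + r + p) = y (k + r) := hyp _ (by omega)
        have h2 : y (k + q) = y k := hyq _ (by omega)
        have h3 : k + r + p = k + q := by omega
        rw [h3] at h1
        rw [← h1, h2]
      have hyp' : ∀ k, k + p < L - p → y (k + p) = y k := fun k hk => hyp k (by omega)
      have hgle : Nat.gcd p q ≤ p := Nat.gcd_le_left _ hp
      have hgq : Nat.gcd p q ≤ q := le_trans hgle hpq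
      rcases le_total p r with hle | hle
      · have hcon := ih r (by omega) p (L - p) hp hle (by omega) hyp' hyr
        rw [← hgcd]
        refine hcon k ?_
        rw [hgcd]
        omega
      · have hcon := ih p hlt r (L - p) hr1 hle (by omega) hyr hyp'
        have hgcd2 : Nat.gcd r p = Nat.gcd p q := by rw [Nat.gcd_comm, hgcd]
        rw [← hgcd2]
        refine hcon k ?_
        rw [hgcd2]
        omega

end LieAux

namespace LieAux

lemma card_mul_le_of_disjoint {β : Type*} (𝒮 : Set (Set β)) (Fn : Set β) (hF : Fn.Finite)
    (m : ℕ) (hsub : ∀ c ∈ 𝒮, c ⊆ Fn)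
    (hdisj : ∀ c ∈ 𝒮, ∀ c' ∈ 𝒮, c ≠ c' → Disjoint c c')
    (hcard : ∀ c ∈ 𝒮, m ≤ c.ncard) : 𝒮.ncard * m ≤ Fn.ncard := by
  classical
  have h𝒮 : 𝒮.Finite := hF.finite_subsets.subset (fun c hc => hsub c hc)
  set SF := h𝒮.toFinset with hSF
  set t : Set β → Finset β := fun c => hF.toFinset.filter (· ∈ c) with ht
  have hcoe : ∀ c ∈ 𝒮, (↑(t c) : Set β) = c := by
    intro c hc
    ext z
    simp only [ht, Finset.coe_filter, Set.Finite.mem_toFinset, Set.mem_setOf_eq]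
    exact ⟨fun h => h.2, fun h => ⟨hsub c hc h, h⟩⟩
  have htcard : ∀ c ∈ 𝒮, (t c).card = c.ncard := by
    intro c hc
    conv_rhs => rw [← hcoe c hc]
    rw [Set.ncard_coe_finset]
  have hdisjF : ∀ c ∈ SF, ∀ c' ∈ SF, c ≠ c' → Disjoint (t c) (t c') := by
    intro c hc c' hc' hne
    rw [Set.Finite.mem_toFinset] at hc hc'
    have := hdisj c hc c' hc' hne
    rw [Finset.disjoint_left]
    intro z hz hz'
    have hz1 : z ∈ c := by rw [← hcoe c hc]; exact_mod_cast hz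
    have hz2 : z ∈ c' := by rw [← hcoe c' hc']; exact_mod_cast hz'
    exact (Set.disjoint_left.mp this hz1) hz2
  have hbu : (SF.biUnion t).card = ∑ c ∈ SF, (t c).card := Finset.card_biUnion hdisjF
  have h1 : SF.card * m ≤ ∑ c ∈ SF, (t c).card := by
    rw [Finset.card_eq_sum_ones SF, Finset.sum_mul, one_mul]
    refine Finset.sum_le_sum ?_
    intro c hc
    rw [Set.Finite.mem_toFinset] at hc
    rw [htcard c hc]
    exact hcard c hc
  have h2 : (SF.biUnion t).card ≤ hF.toFinset.card := by
    refine Finset.card_le_card ?_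
    intro z hz
    rw [Finset.mem_biUnion] at hz
    rcases hz with ⟨c, _, hzc⟩
    exact (Finset.mem_filter.mp hzc).1
  have e1 : 𝒮.ncard = SF.card := Set.ncard_eq_toFinset_card _ h𝒮
  have e2 : Fn.ncard = hF.toFinset.card := Set.ncard_eq_toFinset_card _ hF
  rw [e1, e2]
  omega

/-- length-`ℓ` factors of `w`. -/
def Fac (w : ℕ → α) (ℓ : ℕ) : Set (List α) := {u | u.length = ℓ ∧ IsFactor w u}

/-- length-`ℓ` right-special factors of `w`. -/
def RSp (w : ℕ → α) (ℓ : ℕ) : Set (List α) :=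
  {v | v.length = ℓ ∧ IsFactor w v ∧
    ∃ a b, a ≠ b ∧ IsFactor w (v ++ [a]) ∧ IsFactor w (v ++ [b])}

lemma Fac_finite [Finite α] (w : ℕ → α) (ℓ : ℕ) : (Fac w ℓ).Finite :=
  (finite_len ℓ).subset (fun u hu => hu.1)

lemma fac_def (w : ℕ → α) (n : ℕ) :
    factorComplexity w n = (Fac w n).ncard := rfl

lemma mem_Fac_seg (w : ℕ → α) (i ℓ : ℕ) : seg w i ℓ ∈ Fac w ℓ :=
  ⟨length_seg w i ℓ, isFactor_seg w i ℓ⟩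

lemma step_lemma [Finite α] (w : ℕ → α) (ℓ : ℕ) :
    (Fac w ℓ).ncard + (RSp w ℓ).ncard ≤ (Fac w (ℓ+1)).ncard := by
  classical
  have hext : ∀ v ∈ Fac w ℓ, ∃ a, v ++ [a] ∈ Fac w (ℓ+1) := by
    rintro v ⟨hvl, i, hvi⟩
    rw [hvl] at hvi
    refine ⟨w (i + ℓ), ?_⟩
    rw [show v = seg w i ℓ from hvi, ← seg_succ]
    exact mem_Fac_seg w i (ℓ+1)
  have e₁data : ∀ v : List α, ∃ a : α, v ∈ Fac w ℓ → v ++ [a] ∈ Fac w (ℓ+1) := by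
    intro v
    by_cases h : v ∈ Fac w ℓ
    · exact (hext v h).imp (fun a ha _ => ha)
    · exact ⟨w 0, fun h' => absurd h' h⟩
  choose e₁ he₁ using e₁data
  have e₂data : ∀ v : List α, ∃ b : α,
      v ∈ RSp w ℓ → (b ≠ e₁ v ∧ v ++ [b] ∈ Fac w (ℓ+1)) := by
    intro v
    by_cases h : v ∈ RSp w ℓ
    · obtain ⟨hvl, hvf, a, b, hab, ha, hb⟩ := h
      by_cases hae : a = e₁ v
      · exact ⟨b, fun _ => ⟨by rw [← hae]; exact fun hh => hab hh.symm,
          ⟨by simp [hvl], hb⟩⟩⟩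
      · exact ⟨a, fun _ => ⟨hae, ⟨by simp [hvl], ha⟩⟩⟩
    · exact ⟨w 0, fun h' => absurd h' h⟩
  choose e₂ he₂ using e₂data
  set A₁ := (fun v => v ++ [e₁ v]) '' (Fac w ℓ) with hA₁
  set A₂ := (fun v => v ++ [e₂ v]) '' (RSp w ℓ) with hA₂
  have hRsub : RSp w ℓ ⊆ Fac w ℓ := fun v hv => ⟨hv.1, hv.2.1⟩
  have inj1 : Set.InjOn (fun v => v ++ [e₁ v]) (Fac w ℓ) := by
    intro v hv v' hv' h
    exact (List.append_inj h (by rw [hv.1, hv'.1])).1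
  have inj2 : Set.InjOn (fun v => v ++ [e₂ v]) (RSp w ℓ) := by
    intro v hv v' hv' h
    exact (List.append_inj h (by rw [hv.1, hv'.1])).1
  have hdisj : Disjoint A₁ A₂ := by
    rw [Set.disjoint_left]
    rintro z ⟨v, hv, rfl⟩ ⟨v', hv', heq⟩
    have hlen : v'.length = v.length := by rw [hv.1, hv'.1]
    obtain ⟨hveq, hletter⟩ := List.append_inj heq hlen
    have h2 := (he₂ v' hv')
    rw [hveq] at h2
    have hlet : e₂ v' = e₁ v := by injection hletter
    rw [hveq] at hlet
    exact h2.1 hlet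
  have hsub1 : A₁ ⊆ Fac w (ℓ+1) := by rintro z ⟨v, hv, rfl⟩; exact he₁ v hv
  have hsub2 : A₂ ⊆ Fac w (ℓ+1) := by rintro z ⟨v, hv, rfl⟩; exact (he₂ v hv).2
  have hfin : (Fac w (ℓ+1)).Finite := Fac_finite w (ℓ+1)
  have hc1 : A₁.ncard = (Fac w ℓ).ncard := Set.ncard_image_of_injOn inj1
  have hc2 : A₂.ncard = (RSp w ℓ).ncard := Set.ncard_image_of_injOn inj2
  have hu : (A₁ ∪ A₂).ncard = A₁.ncard + A₂.ncard :=
    Set.ncard_union_eq hdisj (hfin.subset hsub1) (hfin.subset hsub2)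
  have hle : (A₁ ∪ A₂).ncard ≤ (Fac w (ℓ+1)).ncard :=
    Set.ncard_le_ncard (Set.union_subset hsub1 hsub2) hfin
  omega

lemma telescope [Finite α] (w : ℕ → α) (a : ℕ) :
    ∀ k : ℕ, (Fac w a).ncard + ∑ t ∈ Finset.range k, (RSp w (a+t)).ncard
      ≤ (Fac w (a+k)).ncard := by
  intro k
  induction k with
  | zero => simp
  | succ k ihk =>
    rw [Finset.sum_range_succ]
    have h := step_lemma w (a+k)
    have : a + (k+1) = (a+k) + 1 := by omega
    rw [this]
    omega

end LieAux

namespace LieAux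

lemma fine_wilf' {α : Type*} (y : ℕ → α) (p q L : ℕ) (hp : 0 < p) (hq : 0 < q)
    (hL : p + q ≤ L)
    (h1 : ∀ k, k + p < L → y (k + p) = y k) (h2 : ∀ k, k + q < L → y (k + q) = y k) :
    ∀ k, k + (p + q - Nat.gcd p q) < L → y (k + Nat.gcd p q) = y k := by
  rcases le_total p q with h | h
  · exact fine_wilf y q p L hp h hL h1 h2
  · intro k hk
    have := fine_wilf y p q L hq h (by omega) h2 h1
    rw [Nat.gcd_comm q p] at this
    exact this k (by omega)

lemma rotate_inj_of_min {α : Type*} {u : List α} {d : ℕ} (hd : d ≤ u.length)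
    (hmin : ∀ e, 0 < e → u.rotate e = u → d ≤ e) :
    ∀ t t', t < t' → t' < d → u.rotate t ≠ u.rotate t' := by
  intro t t' htt ht' heq
  have hA : u.rotate (t + (u.length - t')) = u.rotate (t' + (u.length - t')) := by
    rw [← List.rotate_rotate, ← List.rotate_rotate, heq]
  rw [show t' + (u.length - t') = u.length by omega, List.rotate_length] at hA
  have h4 : u = u.rotate ((t + (u.length - t')) + (t' - t)) := by
    rw [show (t + (u.length - t')) + (t' - t) = u.length by omega, List.rotate_length]
  rw [← List.rotate_rotate, hA] at h4
  exact absurd (hmin (t' - t) (by omega) h4.symm) (by omega)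

/-- Sets of conjugacy classes counted by `lieComplexity`. -/
def Cls (w : ℕ → α) (n : ℕ) : Set (Set (List α)) :=
  {Cc | ∃ u : List α, u.length = n ∧ (∀ i : ℕ, IsFactor w (u.rotate i)) ∧ Cc = conjClass u}

lemma lie_def (w : ℕ → α) (n : ℕ) : lieComplexity w n = (Cls w n).ncard := rfl

lemma cls_subset_Fac {w : ℕ → α} {n : ℕ} {c : Set (List α)} (hc : c ∈ Cls w n) :
    c ⊆ Fac w n := by
  obtain ⟨u, hlen, hrot, rfl⟩ := hc
  rintro z ⟨t, rfl⟩
  exact ⟨by rw [List.length_rotate, hlen], hrot t⟩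

lemma cls_disjoint {w : ℕ → α} {n : ℕ} {c c' : Set (List α)}
    (hc : c ∈ Cls w n) (hc' : c' ∈ Cls w n) (hne : c ≠ c') : Disjoint c c' := by
  obtain ⟨u, _, _, rfl⟩ := hc
  obtain ⟨u', _, _, rfl⟩ := hc'
  rw [Set.disjoint_left]
  intro z hz hz'
  exact hne ((conjClass_eq_of_mem hz).symm.trans (conjClass_eq_of_mem hz'))

lemma lie_le_fac [Finite α] (w : ℕ → α) (n : ℕ) :
    lieComplexity w n ≤ factorComplexity w n := by
  classical
  rw [lie_def, fac_def]
  have hrep : ∀ c : Set (List α), ∃ u : List α, c ∈ Cls w n →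
      (u ∈ Fac w n ∧ c = conjClass u) := by
    intro c
    by_cases hc : c ∈ Cls w n
    · obtain ⟨u, hlen, hrot, rfl⟩ := hc
      exact ⟨u, fun _ => ⟨⟨hlen, by simpa using hrot 0⟩, rfl⟩⟩
    · exact ⟨[], fun h => absurd h hc⟩
  choose rep hrep using hrep
  refine Set.ncard_le_ncard_of_injOn rep (fun c hc => (hrep c hc).1) ?_ (Fac_finite w n)
  intro c hc c' hc' h
  rw [(hrep c hc).2, (hrep c' hc').2, h]

end LieAux

open LieAux

/-- If `w` has linear factor complexity, then its Lie complexity is uniformly bounded. -/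
theorem lieComplexity_bounded_of_linear {α : Type*} [Fintype α] (w : ℕ → α)
    (C : ℕ) (hC : ∀ n : ℕ, factorComplexity w n ≤ C * n + C) :
    ∃ B : ℕ, ∀ n : ℕ, lieComplexity w n ≤ B := by
  classical
  by_cases hper : ∃ i d : ℕ, 0 < d ∧ ∀ j, i ≤ j → w (j + d) = w j
  · -- eventually periodic: complexity is bounded by the preperiod plus period
    obtain ⟨i₀, d₀, hd₀, hp⟩ := hper
    refine ⟨i₀ + d₀, fun n => ?_⟩
    refine le_trans (lie_le_fac w n) ?_
    rw [fac_def]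
    have hred : ∀ m, i₀ ≤ m → w m = w (i₀ + (m - i₀) % d₀) := by
      intro m
      induction m using Nat.strong_induction_on with
      | _ m ihm =>
        intro him
        by_cases hcase : m < i₀ + d₀
        · rw [Nat.mod_eq_of_lt (by omega)]
          congr 1
          omega
        · have h1 : w (m - d₀ + d₀) = w (m - d₀) := hp _ (by omega)
          rw [show m - d₀ + d₀ = m by omega] at h1
          rw [h1, ihm (m - d₀) (by omega) (by omega)]
          congr 2
          rw [show m - i₀ = (m - d₀ - i₀) + d₀ by omega, Nat.add_mod_right]
    have hsub : Fac w n ⊆ (fun i => seg w i n) '' ↑(Finset.range (i₀ + d₀)) := by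
      rintro u ⟨hlen, i, hu⟩
      rw [hlen] at hu
      by_cases hi : i < i₀ + d₀
      · exact ⟨i, by simpa using hi, hu.symm⟩
      · refine ⟨i₀ + (i - i₀) % d₀, by simpa using Nat.mod_lt (i - i₀) hd₀, ?_⟩
        rw [hu]
        show seg w (i₀ + (i - i₀) % d₀) n = seg w i n
        apply List.ext_getElem (by simp)
        intro t h1 h2
        simp only [getElem_seg]
        rw [hred (i + t) (by omega), hred (i₀ + (i - i₀) % d₀ + t) (by omega)]
        congr 2
        rw [show i₀ + (i - i₀) % d₀ + t - i₀ = (i - i₀) % d₀ + t by omega,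
          Nat.mod_add_mod, show i + t - i₀ = (i - i₀) + t by omega]
    calc (Fac w n).ncard ≤ ((fun i => seg w i n) '' ↑(Finset.range (i₀ + d₀))).ncard :=
          Set.ncard_le_ncard hsub ((Finset.range (i₀ + d₀)).finite_toSet.image _)
      _ ≤ (↑(Finset.range (i₀ + d₀)) : Set ℕ).ncard :=
          Set.ncard_image_le (Finset.range (i₀ + d₀)).finite_toSet
      _ = i₀ + d₀ := by rw [Set.ncard_coe_finset, Finset.card_range]
  · -- aperiodic case
    push_neg at hper
    refine ⟨100 * C + 100, fun n => ?_⟩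
    by_cases hn : n < 100
    · -- small n : use L ≤ p ≤ C n + C
      refine le_trans (lie_le_fac w n) (le_trans (hC n) ?_)
      have : C * n ≤ C * 99 := Nat.mul_le_mul_left C (by omega)
      omega
    push_neg at hn
    -- ======== main case : n ≥ 100 ========
    have hn1 : 0 < n := by omega
    -- choose, for each class, a representative word, an occurrence, the minimal
    -- rotation period, and the first periodicity breakpoint after the occurrence
    have hdata : ∀ c : Set (List α), ∃ u : List α, ∃ i d j : ℕ, c ∈ Cls w n →
        (c = conjClass u ∧ u.length = n ∧ (∀ t : ℕ, IsFactor w (u.rotate t)) ∧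
         u = seg w i n ∧ 0 < d ∧ u.rotate d = u ∧
         (∀ e, 0 < e → u.rotate e = u → d ≤ e) ∧ d ∣ n ∧
         i + n ≤ j ∧ w j ≠ w (j - d) ∧
         (∀ m, i + n ≤ m → m < j → w m = w (m - d))) := by
      intro c
      by_cases hc : c ∈ Cls w n
      · obtain ⟨u, hlen, hrot, hcu⟩ := hc
        obtain ⟨i, hi⟩ := eq_seg_of_isFactor (by simpa using hrot 0)
        rw [hlen] at hi
        have hex : ∃ d, 0 < d ∧ u.rotate d = u :=
          ⟨n, hn1, by rw [← hlen]; exact u.rotate_length⟩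
        obtain ⟨hdpos, hdrot⟩ := Nat.find_spec hex
        set d := Nat.find hex with hd
        have hdmin : ∀ e, 0 < e → u.rotate e = u → d ≤ e := fun e he hre =>
          Nat.find_min' hex ⟨he, hre⟩
        have hrotmul : ∀ k : ℕ, u.rotate (d * k) = u := by
          intro k
          induction k with
          | zero => simp
          | succ k ihk => rw [Nat.mul_succ, ← List.rotate_rotate, ihk, hdrot]
        have hdvd : d ∣ n := by
          by_contra hnd
          have hr : 0 < n % d :=
            Nat.pos_of_ne_zero (fun h => hnd (Nat.dvd_of_mod_eq_zero h))
          have h1 : u.rotate (d * (n / d) + n % d) = u.rotate (n % d) := by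
            rw [← List.rotate_rotate, hrotmul]
          rw [Nat.div_add_mod n d] at h1
          have h2 : u.rotate n = u := by rw [← hlen]; exact u.rotate_length
          have := hdmin (n % d) hr (by rw [← h1, h2])
          have := Nat.mod_lt n hdpos
          omega
        obtain ⟨j₀, hj₀, hj₀ne⟩ := hper (i + n) d hdpos
        have hexj : ∃ J, i + n ≤ J ∧ w J ≠ w (J - d) :=
          ⟨j₀ + d, by omega, by simpa [Nat.add_sub_cancel] using hj₀ne⟩
        obtain ⟨hjge, hjne⟩ := Nat.find_spec hexj
        refine ⟨u, i, d, Nat.find hexj, fun _ =>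
          ⟨hcu, hlen, hrot, hi, hdpos, hdrot, hdmin, hdvd, hjge, hjne, ?_⟩⟩
        intro m h1 h2
        by_contra hne
        exact absurd (Nat.find_min' hexj ⟨h1, hne⟩) (by omega)
      · exact ⟨[], 0, 0, 0, fun h => absurd h hc⟩
    choose U I D J hU using hdata
    -- the run property : w is D-periodic on [I, J)
    have step : ∀ c ∈ Cls w n, ∀ m, I c ≤ m → m + D c < J c → w (m + D c) = w m := by
      intro c hc m him hmj
      obtain ⟨hcu, hlen, hrot, hseg, hdpos, hdrot, hdmin, hdvd, hjge, hjne, hjmin⟩ := hU c hc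
      by_cases hcase : m + D c < I c + n
      · -- inside the chosen occurrence of u : use the rotation periodicity
        set k := m - I c with hk
        have hkd : k + D c < n := by omega
        have hsegrot : (seg w (I c) n).rotate (D c) = seg w (I c) n := by
          rw [← hseg]; exact hdrot
        have hgk : ((seg w (I c) n).rotate (D c))[k]'(by simp; omega)
            = (seg w (I c) n)[k]'(by simp; omega) := by
          congr 1
        rw [List.getElem_rotate] at hgk
        simp only [getElem_seg, length_seg] at hgk
        rw [Nat.mod_eq_of_lt (show k + D c < n by omega)] at hgk
        have : I c + (k + D c) = m + D c := by omega
        rw [this] at hgk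
        rw [hgk]
        congr 1
        omega
      · have h1 := hjmin (m + D c) (by omega) hmj
        rw [Nat.add_sub_cancel] at h1
        exact h1
    have R : ∀ c ∈ Cls w n, ∀ b a : ℕ, a ≤ b → I c ≤ a → b < J c →
        a % D c = b % D c → w a = w b := by
      intro c hc b
      induction b using Nat.strong_induction_on with
      | _ b ihb =>
        intro a hab ha hbj hmod
        rcases eq_or_lt_of_le hab with rfl | h
        · rfl
        · have hdpos : 0 < D c := (hU c hc).2.2.2.2.1
          have hdvdba : D c ∣ b - a := (Nat.modEq_iff_dvd' (le_of_lt h)).mp hmod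
          have hbd : a + D c ≤ b := by
            have := Nat.le_of_dvd (by omega) hdvdba
            omega
          have h1 : w b = w (b - D c) := by
            have h2 := step c hc (b - D c) (by omega) (by omega)
            rw [show b - D c + D c = b by omega] at h2
            exact h2
          have hmod2 : a % D c = (b - D c) % D c := by
            rw [hmod]
            conv_lhs => rw [show b = (b - D c) + D c by omega, Nat.add_mod_right]
          rw [h1]
          exact ihb (b - D c) (by omega) a (by omega) ha (by omega) hmod2
    -- symmetric version
    have R2 : ∀ c ∈ Cls w n, ∀ a b : ℕ, I c ≤ a → I c ≤ b → a < J c → b < J c →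
        a % D c = b % D c → w a = w b := by
      intro c hc a b ha hb haj hbj hmod
      rcases le_total a b with h | h
      · exact R c hc b a h ha hbj hmod
      · exact (R c hc a b h hb haj hmod.symm).symm
    clear R
    -- the class is recoverable from the tail of the run
    have hback : ∀ c ∈ Cls w n, c = conjClass (seg w (J c - n) n) := by
      intro c hc
      obtain ⟨hcu, hlen, hrot, hseg, hdpos, hdrot, hdmin, hdvd, hjge, hjne, hjmin⟩ := hU c hc
      have hnd : n = D c * (n / D c) := (Nat.mul_div_cancel' hdvd).symm
      set δ := J c - n - I c with hδ
      have hv : seg w (J c - n) n = (U c).rotate δ := by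
        apply List.ext_getElem (by simp [hlen])
        intro k h1 h2
        have h2' : k < n := by simpa [hlen] using h2
        rw [List.getElem_rotate]
        simp only [getElem_seg, hseg, length_seg]
        have hmlt : (k + δ) % n < n := Nat.mod_lt _ hn1
        refine R2 c hc (J c - n + k) (I c + (k + δ) % n) (by omega) (by omega)
          (by omega) (by omega) ?_
        have m1 : (J c - n + k) % D c = (J c + k) % D c := by
          have h := Nat.add_mul_mod_self_left (J c - n + k) (D c) (n / D c)
          rw [← hnd] at h
          rw [show J c + k = J c - n + k + n by omega]
          exact h.symm
        have m2 : (I c + (k + δ) % n) % D c = (I c + (k + δ)) % D c :=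
          Nat.ModEq.add_left (I c) (Nat.mod_mod_of_dvd _ hdvd)
        have m3 : (I c + (k + δ)) % D c = (J c + k) % D c := by
          have h := Nat.add_mul_mod_self_left (I c + (k + δ)) (D c) (n / D c)
          rw [← hnd] at h
          rw [show J c + k = I c + (k + δ) + n by omega]
          exact h.symm
        rw [m1, m2, m3]
      rw [hv, conjClass_rotate]
      exact hcu
    set S₁ : Set (Set (List α)) := {c | c ∈ Cls w n ∧ n ≤ 8 * D c} with hS₁def
    set S₂ : Set (Set (List α)) := {c | c ∈ Cls w n ∧ 8 * D c < n} with hS₂def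
    -- ==== bound for S₁ : each class has at least (n+7)/8 elements ====
    have hS₁count : S₁.ncard * ((n + 7) / 8) ≤ C * n + C := by
      have h := card_mul_le_of_disjoint S₁ (Fac w n) (Fac_finite w n) ((n + 7) / 8)
        (fun c hc => cls_subset_Fac hc.1)
        (fun c hc c' hc' hne => cls_disjoint hc.1 hc'.1 hne) ?_
      · refine le_trans h ?_
        rw [← fac_def]
        exact hC n
      · intro c hc
        obtain ⟨hcC, hbig⟩ := hc
        obtain ⟨hcu, hlen, hrot, hseg, hdpos, hdrot, hdmin, hdvd, hjge, hjne, hjmin⟩ :=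
          hU c hcC
        have hdn : D c ≤ n := hdmin n hn1 (by rw [← hlen]; exact (U c).rotate_length)
        have hinj : Set.InjOn (fun t => (U c).rotate t) ↑(Finset.range (D c)) := by
          intro t ht t' ht' heq
          simp only [Finset.coe_range, Set.mem_Iio] at ht ht'
          by_contra hne
          rcases lt_or_gt_of_ne hne with hlt | hlt
          · exact rotate_inj_of_min (by omega) hdmin t t' hlt ht' heq
          · exact rotate_inj_of_min (by omega) hdmin t' t hlt ht heq.symm
        have himg : ((fun t => (U c).rotate t) '' ↑(Finset.range (D c))) ⊆ c := by
          rintro z ⟨t, _, rfl⟩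
          have hmem : (U c).rotate t ∈ conjClass (U c) := ⟨t, rfl⟩
          rwa [← hcu] at hmem
        have hcfin : c.Finite := (Fac_finite w n).subset (cls_subset_Fac hcC)
        have hcard : ((fun t => (U c).rotate t) '' ↑(Finset.range (D c))).ncard = D c := by
          rw [Set.ncard_image_of_injOn hinj, Set.ncard_coe_finset, Finset.card_range]
        have hle := Set.ncard_le_ncard himg hcfin
        rw [hcard] at hle
        omega
    have hS₁fin : S₁.ncard ≤ 9 * C := by
      have hm₁pos : 0 < (n + 7) / 8 := by omega
      have hn8 : n ≤ 8 * ((n + 7) / 8) := by omega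
      have h1 : C * n ≤ C * (8 * ((n + 7) / 8)) := Nat.mul_le_mul_left C hn8
      have h1' : C * (8 * ((n + 7) / 8)) = 8 * (C * ((n + 7) / 8)) := by ring
      have h2 : C ≤ C * ((n + 7) / 8) := Nat.le_mul_of_pos_right C hm₁pos
      have h3 : (9 : ℕ) * C * ((n + 7) / 8) = 9 * (C * ((n + 7) / 8)) := by ring
      have h5 : S₁.ncard * ((n + 7) / 8) ≤ 9 * C * ((n + 7) / 8) := by omega
      exact Nat.le_of_mul_le_mul_right h5 hm₁pos
    -- ==== bound for S₂ : injection into right-special factors of length ℓ ====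
    have hS₂ℓ : ∀ ℓ : ℕ, 3 * n / 8 < ℓ → ℓ ≤ 3 * n / 8 + n / 16 →
        S₂.ncard ≤ (RSp w ℓ).ncard := by
      intro ℓ hℓ1 hℓ2
      have hRfin : (RSp w ℓ).Finite := (Fac_finite w ℓ).subset (fun v hv => ⟨hv.1, hv.2.1⟩)
      refine Set.ncard_le_ncard_of_injOn (fun c => seg w (J c - ℓ) ℓ) ?_ ?_ hRfin
      · -- the map lands in right-special factors
        rintro c ⟨hcC, hsmall⟩
        obtain ⟨hcu, hlen, hrot, hseg, hdpos, hdrot, hdmin, hdvd, hjge, hjne, hjmin⟩ :=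
          hU c hcC
        have hℓd : ℓ + D c ≤ n := by omega
        have hshift : seg w (J c - ℓ - D c) ℓ = seg w (J c - ℓ) ℓ := by
          apply List.ext_getElem (by simp)
          intro k hk1 hk2
          have hkℓ : k < ℓ := by simpa using hk1
          simp only [getElem_seg]
          refine R2 c hcC _ _ (by omega) (by omega) (by omega) (by omega) ?_
          rw [show J c - ℓ + k = (J c - ℓ - D c + k) + D c by omega, Nat.add_mod_right]
        refine ⟨length_seg w _ ℓ, isFactor_seg w _ ℓ,
          w (J c - D c), w (J c), fun h => hjne h.symm, ?_, ?_⟩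
        · have h1 : seg w (J c - ℓ - D c) (ℓ + 1)
              = seg w (J c - ℓ) ℓ ++ [w (J c - D c)] := by
            rw [seg_succ, hshift, show J c - ℓ - D c + ℓ = J c - D c by omega]
          rw [← h1]
          exact isFactor_seg w _ _
        · have h1 : seg w (J c - ℓ) (ℓ + 1) = seg w (J c - ℓ) ℓ ++ [w (J c)] := by
            rw [seg_succ, show J c - ℓ + ℓ = J c by omega]
          rw [← h1]
          exact isFactor_seg w _ _
      · -- injectivity
        rintro c ⟨hcC, hsm⟩ c' ⟨hcC', hsm'⟩ heq
        obtain ⟨hcu, hlen, hrot, hseg, hdpos, hdrot, hdmin, hdvd, hjge, hjne, hjmin⟩ :=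
          hU c hcC
        obtain ⟨hcu', hlen', hrot', hseg', hdpos', hdrot', hdmin', hdvd', hjge', hjne',
          hjmin'⟩ := hU c' hcC'
        have hyy : ∀ k, k < ℓ → w (J c - ℓ + k) = w (J c' - ℓ + k) := by
          intro k hk
          have h := congrArg (fun l : List α => l[k]?) heq
          simpa [seg, hk] using h
        have hyd : ∀ k, k + D c < ℓ → w (J c - ℓ + (k + D c)) = w (J c - ℓ + k) := by
          intro k hk
          refine R2 c hcC _ _ (by omega) (by omega) (by omega) (by omega) ?_
          rw [show J c - ℓ + (k + D c) = (J c - ℓ + k) + D c by omega, Nat.add_mod_right]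
        have hyd' : ∀ k, k + D c' < ℓ → w (J c - ℓ + (k + D c')) = w (J c - ℓ + k) := by
          intro k hk
          rw [hyy (k + D c') (by omega), hyy k (by omega)]
          refine R2 c' hcC' _ _ (by omega) (by omega) (by omega) (by omega) ?_
          rw [show J c' - ℓ + (k + D c') = (J c' - ℓ + k) + D c' by omega,
            Nat.add_mod_right]
        have hgd : Nat.gcd (D c) (D c') ∣ D c := Nat.gcd_dvd_left _ _
        have hgd' : Nat.gcd (D c) (D c') ∣ D c' := Nat.gcd_dvd_right _ _
        have hgpos : 0 < Nat.gcd (D c) (D c') := Nat.gcd_pos_of_pos_left _ hdpos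
        have hgled : Nat.gcd (D c) (D c') ≤ D c := Nat.le_of_dvd hdpos hgd
        have hfw := fine_wilf' (fun k => w (J c - ℓ + k)) (D c) (D c') ℓ hdpos hdpos'
          (by omega) hyd hyd'
        have hstrip : ∀ m, m + (D c + D c' - Nat.gcd (D c) (D c')) < ℓ →
            w (J c - ℓ + m) = w (J c - ℓ + (m % Nat.gcd (D c) (D c'))) := by
          intro m
          induction m using Nat.strong_induction_on with
          | _ m ihm =>
            intro hm
            by_cases hmg : m < Nat.gcd (D c) (D c')
            · rw [Nat.mod_eq_of_lt hmg]
            · have h1 : w (J c - ℓ + m) = w (J c - ℓ + (m - Nat.gcd (D c) (D c'))) := by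
                have h0 := hfw (m - Nat.gcd (D c) (D c')) (by omega)
                simpa [show (m - Nat.gcd (D c) (D c')) + Nat.gcd (D c) (D c') = m
                  by omega] using h0
              rw [h1, ihm (m - Nat.gcd (D c) (D c')) (by omega) (by omega)]
              congr 1
              conv_rhs => rw [show m = (m - Nat.gcd (D c) (D c')) + Nat.gcd (D c) (D c')
                by omega, Nat.add_mod_right]
        have hkey : seg w (J c - n) n = seg w (J c' - n) n := by
          apply List.ext_getElem (by simp)
          intro k hk1 hk2
          have hkn : k < n := by simpa using hk1
          simp only [getElem_seg]
          have hmd := Nat.mod_lt (k + ℓ) hdpos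
          have hmd' := Nat.mod_lt (k + ℓ) hdpos'
          have hA : w (J c - n + k) = w (J c - ℓ + ((k + ℓ) % D c)) := by
            refine R2 c hcC _ _ (by omega) (by omega) (by omega) (by omega) ?_
            have hnd : n = D c * (n / D c) := (Nat.mul_div_cancel' hdvd).symm
            have m1 : (J c - n + k) % D c = (J c + k) % D c := by
              have h := Nat.add_mul_mod_self_left (J c - n + k) (D c) (n / D c)
              rw [← hnd] at h
              rw [show J c + k = J c - n + k + n by omega]
              exact h.symm
            have m2 : (J c - ℓ + ((k + ℓ) % D c)) % D c = (J c - ℓ + (k + ℓ)) % D c :=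
              Nat.ModEq.add_left _ (Nat.mod_modEq (k + ℓ) (D c))
            have m3 : (J c - ℓ + (k + ℓ)) % D c = (J c + k) % D c := by
              congr 1
              omega
            rw [m1, m2, m3]
          have hA' : w (J c' - n + k) = w (J c' - ℓ + ((k + ℓ) % D c')) := by
            refine R2 c' hcC' _ _ (by omega) (by omega) (by omega) (by omega) ?_
            have hnd : n = D c' * (n / D c') := (Nat.mul_div_cancel' hdvd').symm
            have m1 : (J c' - n + k) % D c' = (J c' + k) % D c' := by
              have h := Nat.add_mul_mod_self_left (J c' - n + k) (D c') (n / D c')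
              rw [← hnd] at h
              rw [show J c' + k = J c' - n + k + n by omega]
              exact h.symm
            have m2 : (J c' - ℓ + ((k + ℓ) % D c')) % D c'
                = (J c' - ℓ + (k + ℓ)) % D c' :=
              Nat.ModEq.add_left _ (Nat.mod_modEq (k + ℓ) (D c'))
            have m3 : (J c' - ℓ + (k + ℓ)) % D c' = (J c' + k) % D c' := by
              congr 1
              omega
            rw [m1, m2, m3]
          have hB : w (J c - ℓ + ((k + ℓ) % D c))
              = w (J c - ℓ + ((k + ℓ) % Nat.gcd (D c) (D c'))) := by
            have s1 := hstrip ((k + ℓ) % D c) (by omega)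
            rw [s1, Nat.mod_mod_of_dvd _ hgd]
          have hB' : w (J c - ℓ + ((k + ℓ) % D c'))
              = w (J c - ℓ + ((k + ℓ) % Nat.gcd (D c) (D c'))) := by
            have s1 := hstrip ((k + ℓ) % D c') (by omega)
            rw [s1, Nat.mod_mod_of_dvd _ hgd']
          have hCC : w (J c' - ℓ + ((k + ℓ) % D c'))
              = w (J c - ℓ + ((k + ℓ) % D c')) :=
            (hyy _ (by omega)).symm
          rw [hA, hA', hCC, hB, hB']
        have hb1 := hback c hcC
        have hb2 := hback c' hcC'
        rw [hb1, hb2, hkey]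
    -- ==== assembly ====
    have hsplit : Cls w n = S₁ ∪ S₂ := by
      ext c
      constructor
      · intro hc
        by_cases h : n ≤ 8 * D c
        · exact Or.inl ⟨hc, h⟩
        · exact Or.inr ⟨hc, by omega⟩
      · rintro (⟨hc, _⟩ | ⟨hc, _⟩) <;> exact hc
    have htot : (Cls w n).ncard ≤ S₁.ncard + S₂.ncard := by
      rw [hsplit]
      exact Set.ncard_union_le _ _
    have hkpos : 0 < n / 16 := by omega
    have hsum := telescope w (3 * n / 8 + 1) (n / 16)
    have hterm : ∀ t ∈ Finset.range (n / 16),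
        S₂.ncard ≤ (RSp w (3 * n / 8 + 1 + t)).ncard := by
      intro t ht
      rw [Finset.mem_range] at ht
      exact hS₂ℓ (3 * n / 8 + 1 + t) (by omega) (by omega)
    have hsum2 : S₂.ncard * (n / 16)
        ≤ ∑ t ∈ Finset.range (n / 16), (RSp w (3 * n / 8 + 1 + t)).ncard := by
      calc S₂.ncard * (n / 16) = ∑ _t ∈ Finset.range (n / 16), S₂.ncard := by
            rw [Finset.sum_const, Finset.card_range, smul_eq_mul, mul_comm]
        _ ≤ _ := Finset.sum_le_sum hterm
    have hS₂count : S₂.ncard * (n / 16) ≤ C * (3 * n / 8 + 1 + n / 16) + C := by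
      have hCb := hC (3 * n / 8 + 1 + n / 16)
      rw [fac_def] at hCb
      omega
    have hS₂fin : S₂.ncard ≤ 15 * C := by
      have hak : 3 * n / 8 + 1 + n / 16 ≤ 14 * (n / 16) := by omega
      have h1 : C * (3 * n / 8 + 1 + n / 16) ≤ C * (14 * (n / 16)) :=
        Nat.mul_le_mul_left C hak
      have h2 : C * (14 * (n / 16)) = 14 * (C * (n / 16)) := by ring
      have h4 : C ≤ C * (n / 16) := Nat.le_mul_of_pos_right C hkpos
      have h6 : (15 * C) * (n / 16) = 15 * (C * (n / 16)) := by ring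
      have h5 : S₂.ncard * (n / 16) ≤ (15 * C) * (n / 16) := by omega
      exact Nat.le_of_mul_le_mul_right h5 hkpos
    rw [lie_def]
    omega
end

section
/- For every Sturmian word s and every n ≥ 1, L_s(n) ≤ 2. -/
namespace SturmianAux

/-- The window of length `m` of `s` starting at position `i`. -/
def win (s : ℕ → Fin 2) (i m : ℕ) : List (Fin 2) :=
  (List.range m).map fun j => s (i + j)

lemma win_length (s : ℕ → Fin 2) (i m : ℕ) : (win s i m).length = m := by simp [win]

lemma win_add (s : ℕ → Fin 2) (i a b : ℕ) :
    win s i (a + b) = win s i a ++ win s (i + a) b := by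
  simp [win, List.range_add, List.map_map, Function.comp_def, add_assoc]

lemma win_one (s : ℕ → Fin 2) (i : ℕ) : win s i 1 = [s i] := by rw [show (1:ℕ) = 0 + 1 from rfl, win]; simp [List.range_succ]

lemma isFactor_win (s : ℕ → Fin 2) (i m : ℕ) : IsFactor s (win s i m) :=
  ⟨i, by rw [win_length]; rfl⟩

lemma factor_eq_win {s : ℕ → Fin 2} {u : List (Fin 2)} {m : ℕ}
    (h : IsFactor s u) (hl : u.length = m) : ∃ i, u = win s i m := by
  obtain ⟨i, hi⟩ := h
  exact ⟨i, by rw [← hl]; exact hi⟩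

lemma win_take (s : ℕ → Fin 2) (i m k : ℕ) : (win s i m).take k = win s i (min k m) := by
  simp [win, ← List.map_take, List.take_range]

lemma factor_take {s : ℕ → Fin 2} {u : List (Fin 2)} (h : IsFactor s u) (k : ℕ) :
    IsFactor s (u.take k) := by
  obtain ⟨i, hi⟩ := factor_eq_win h rfl
  rw [hi, win_take]
  exact isFactor_win ..

/-- The set of factors of length `m`. -/
def Fset (s : ℕ → Fin 2) (m : ℕ) : Set (List (Fin 2)) :=
  {u : List (Fin 2) | u.length = m ∧ IsFactor s u}

lemma Fset_ncard {s : ℕ → Fin 2} (hs : ∀ n : ℕ, factorComplexity s n = n + 1) (m : ℕ) :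
    (Fset s m).ncard = m + 1 := hs m

lemma Fset_finite {s : ℕ → Fin 2} (hs : ∀ n : ℕ, factorComplexity s n = n + 1) (m : ℕ) :
    (Fset s m).Finite := by
  by_contra h
  have h2 : (Fset s m).ncard = 0 := Set.Infinite.ncard h
  have := Fset_ncard hs m
  omega

lemma fin2 (b : Fin 2) : b = 0 ∨ b = 1 := by revert b; decide

/-- `t` is right special: it can be extended by two distinct letters into factors. -/
def RS (s : ℕ → Fin 2) (t : List (Fin 2)) : Prop :=
  ∃ b c : Fin 2, b ≠ c ∧ IsFactor s (t ++ [b]) ∧ IsFactor s (t ++ [c])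

lemma RS.both {s : ℕ → Fin 2} {t : List (Fin 2)} (h : RS s t) :
    IsFactor s (t ++ [(0 : Fin 2)]) ∧ IsFactor s (t ++ [(1 : Fin 2)]) := by
  obtain ⟨b, c, hbc, hb, hc⟩ := h
  rcases fin2 b with rfl | rfl <;> rcases fin2 c with rfl | rfl <;> simp_all

/-- There is at most one right-special factor of each length. -/
lemma rs_unique (s : ℕ → Fin 2) (hs : ∀ n : ℕ, factorComplexity s n = n + 1)
    {m : ℕ} {t1 t2 : List (Fin 2)} (h1 : t1.length = m) (h2 : t2.length = m)
    (r1 : RS s t1) (r2 : RS s t2) : t1 = t2 := by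
  classical
  by_contra hne
  have hpairne : t1 ++ [(1 : Fin 2)] ≠ t2 ++ [(1 : Fin 2)] := by
    intro h
    exact hne (List.append_inj h (by omega)).1
  have m10 : t1 ++ [(0 : Fin 2)] ∈ Fset s (m + 1) := ⟨by simp [h1], r1.both.1⟩
  have m11 : t1 ++ [(1 : Fin 2)] ∈ Fset s (m + 1) := ⟨by simp [h1], r1.both.2⟩
  have m20 : t2 ++ [(0 : Fin 2)] ∈ Fset s (m + 1) := ⟨by simp [h2], r2.both.1⟩
  have m21 : t2 ++ [(1 : Fin 2)] ∈ Fset s (m + 1) := ⟨by simp [h2], r2.both.2⟩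
  set E : List (Fin 2) → List (Fin 2) :=
    fun t => t ++ [if IsFactor s (t ++ [0]) then (0 : Fin 2) else 1] with hE
  have hmaps : ∀ t ∈ Fset s m, E t ∈ Fset s (m + 1) \ {t1 ++ [1], t2 ++ [1]} := by
    rintro t ⟨hl, hf⟩
    have hmem : E t ∈ Fset s (m + 1) := by
      by_cases h0 : IsFactor s (t ++ [0])
      · refine ⟨by simp [hE, hl], ?_⟩
        simpa [hE, h0] using h0
      · obtain ⟨i, hi⟩ := factor_eq_win hf hl
        have hfac : IsFactor s (t ++ [s (i + m)]) := by
          have heq : t ++ [s (i + m)] = win s i (m + 1) := by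
            rw [hi, win_add s i m 1, win_one]
          rw [heq]; exact isFactor_win ..
        have hone : s (i + m) = 1 := by
          rcases fin2 (s (i + m)) with h | h
          · exact absurd (h ▸ hfac) h0
          · exact h
        refine ⟨by simp [hE, hl], ?_⟩
        simpa [hE, h0, ← hone] using hfac
    refine ⟨hmem, ?_⟩
    intro hbad
    rcases hbad with hbad | hbad
    · obtain ⟨rfl, hlet⟩ := List.append_inj hbad (by omega)
      have : IsFactor s (t ++ [0]) := r1.both.1
      simp [this] at hlet
    · simp only [Set.mem_singleton_iff] at hbad
      obtain ⟨rfl, hlet⟩ := List.append_inj hbad (by omega)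
      have : IsFactor s (t ++ [0]) := r2.both.1
      simp [this] at hlet
  have hinj : Set.InjOn E (Fset s m) := by
    rintro t ⟨hl, _⟩ t' ⟨hl', _⟩ heq
    exact (List.append_inj heq (by omega)).1
  have hsubpair : {t1 ++ [(1 : Fin 2)], t2 ++ [(1 : Fin 2)]} ⊆ Fset s (m + 1) := by
    intro x hx
    rcases hx with rfl | hx
    · exact m11
    · simp only [Set.mem_singleton_iff] at hx
      exact hx ▸ m21
  have hle : (Fset s m).ncard ≤ (Fset s (m + 1) \ {t1 ++ [1], t2 ++ [1]}).ncard :=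
    Set.ncard_le_ncard_of_injOn E hmaps hinj ((Fset_finite hs (m + 1)).diff)
  have hdiff : (Fset s (m + 1) \ {t1 ++ [1], t2 ++ [1]}).ncard
      = (Fset s (m + 1)).ncard - ({t1 ++ [(1 : Fin 2)], t2 ++ [1]} : Set _).ncard :=
    Set.ncard_diff hsubpair ((Fset_finite hs (m + 1)).subset hsubpair)
  rw [Set.ncard_pair hpairne] at hdiff
  have hA := Fset_ncard hs m
  have hB := Fset_ncard hs (m + 1)
  omega

/-- The class lemma: some rotation has a right-special prefix (else `s` would be
eventually periodic, contradicting unbounded complexity). -/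
lemma not_all_det (s : ℕ → Fin 2) (hs : ∀ n : ℕ, factorComplexity s n = n + 1)
    {m : ℕ} (u : List (Fin 2)) (hu : u.length = m + 1)
    (hrot : ∀ k : ℕ, IsFactor s (u.rotate k)) :
    ∃ k, ¬ ∀ b c : Fin 2, IsFactor s ((u.rotate k).take m ++ [b]) →
      IsFactor s ((u.rotate k).take m ++ [c]) → b = c := by
  by_contra hcon
  push_neg at hcon
  have hdet : ∀ k, ∀ b c : Fin 2, IsFactor s ((u.rotate k).take m ++ [b]) →
      IsFactor s ((u.rotate k).take m ++ [c]) → b = c := by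
    intro k
    exact hcon k
  have h0 : IsFactor s u := by have := hrot 0; rwa [List.rotate_zero] at this
  obtain ⟨i, hiw⟩ := factor_eq_win h0 hu
  have claim : ∀ k, win s (i + k) (m + 1) = u.rotate k := by
    intro k
    induction k with
    | zero => simpa using hiw.symm
    | succ k ih =>
      have hlenr : (u.rotate k).length = m + 1 := by simp [hu]
      have hlenr' : (u.rotate (k + 1)).length = m + 1 := by simp [hu]
      have hsplit : win s (i + k) (m + 1) = win s (i + k) 1 ++ win s (i + k + 1) m := by
        have := win_add s (i + k) 1 m
        rwa [Nat.add_comm 1 m] at this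
      have hdrop : win s (i + k + 1) m = (u.rotate k).drop 1 := by
        have h := hsplit
        rw [ih, win_one] at h
        rw [h]
        simp
      have hrot1 : u.rotate (k + 1) = (u.rotate k).drop 1 ++ (u.rotate k).take 1 := by
        rw [← List.rotate_rotate]
        exact List.rotate_eq_drop_append_take (by omega)
      have htake : (u.rotate (k + 1)).take m = win s (i + k + 1) m := by
        rw [hrot1, hdrop]
        exact List.take_left' (by simp [hlenr])
      have hne : u.rotate (k + 1) ≠ [] := by
        intro h; rw [h] at hlenr'; simp at hlenr'
      have hlast : (u.rotate (k + 1)).take m ++ [(u.rotate (k + 1)).getLast hne]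
          = u.rotate (k + 1) := by
        conv_rhs => rw [← List.dropLast_append_getLast hne]
        congr 1
        rw [List.dropLast_eq_take, hlenr']
        simp
      have hwin : win s (i + k + 1) (m + 1) = win s (i + k + 1) m ++ [s (i + k + 1 + m)] := by
        rw [win_add s (i + k + 1) m 1, win_one]
      have hfac1 : IsFactor s ((u.rotate (k + 1)).take m ++ [s (i + k + 1 + m)]) := by
        rw [htake, ← hwin]
        exact isFactor_win ..
      have hfac2 : IsFactor s ((u.rotate (k + 1)).take m ++ [(u.rotate (k + 1)).getLast hne]) := by
        rw [hlast]; exact hrot (k + 1)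
      have heq := hdet (k + 1) _ _ hfac1 hfac2
      have : win s (i + k + 1) (m + 1) = u.rotate (k + 1) := by
        rw [hwin, ← htake, heq]
        exact hlast
      rwa [show i + (k + 1) = i + k + 1 from by omega]
  have hper : ∀ k, s (i + k) = s (i + k % (m + 1)) := by
    intro k
    have hrotmod : u.rotate (k % (m + 1)) = u.rotate k := by
      have h := List.rotate_mod u k
      rwa [hu] at h
    have h12 : win s (i + k) (m + 1) = win s (i + k % (m + 1)) (m + 1) := by
      rw [claim k, claim (k % (m + 1)), hrotmod]
    have hj : ∀ j, win s j (m + 1) = s j :: win s (j + 1) m := by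
      intro j
      rw [show m + 1 = 1 + m from by omega, win_add, win_one]
      simp
    rw [hj, hj] at h12
    exact (List.cons.injEq _ _ _ _ ▸ h12).1
  -- complexity bound contradiction
  have hsub : Fset s (i + m + 1) ⊆ (fun j => win s j (i + m + 1)) '' Set.Iio (i + m + 1) := by
    rintro v ⟨hl, hf⟩
    obtain ⟨j, hj⟩ := factor_eq_win hf hl
    by_cases hjM : j < i + m + 1
    · exact ⟨j, hjM, hj.symm⟩
    · push_neg at hjM
      have hij : i ≤ j := by omega
      have hmod : (j - i) % (m + 1) < m + 1 := Nat.mod_lt _ (by omega)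
      refine ⟨i + (j - i) % (m + 1), Set.mem_Iio.mpr (by omega), ?_⟩
      rw [hj]
      simp only [win]
      apply List.map_congr_left
      intro l _
      have e1 : j + l = i + ((j - i) + l) := by omega
      have e2 : i + (j - i) % (m + 1) + l = i + ((j - i) % (m + 1) + l) := by omega
      rw [e2, e1, hper ((j - i) % (m + 1) + l), hper ((j - i) + l), Nat.mod_add_mod]
  have hfin : ((fun j => win s j (i + m + 1)) '' Set.Iio (i + m + 1)).Finite :=
    (Set.finite_Iio (i + m + 1)).image _
  have h1 : (Fset s (i + m + 1)).ncard
      ≤ ((fun j => win s j (i + m + 1)) '' Set.Iio (i + m + 1)).ncard :=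
    Set.ncard_le_ncard hsub hfin
  have h2 : ((fun j => win s j (i + m + 1)) '' Set.Iio (i + m + 1)).ncard
      ≤ (Set.Iio (i + m + 1)).ncard :=
    Set.ncard_image_le (Set.finite_Iio (i + m + 1))
  have h3 : (Set.Iio (i + m + 1) : Set ℕ).ncard = i + m + 1 := by
    rw [← Finset.coe_range, Set.ncard_coe_finset, Finset.card_range]
  have h4 := Fset_ncard hs (i + m + 1)
  omega

lemma rotate_add_mul (u : List (Fin 2)) (j c : ℕ) :
    u.rotate (j + u.length * c) = u.rotate j := by
  induction c with
  | zero => simp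
  | succ c ih =>
    rw [Nat.mul_succ, ← Nat.add_assoc, ← List.rotate_rotate]
    have h := List.rotate_length (u.rotate (j + u.length * c))
    rw [List.length_rotate] at h
    rw [h, ih]

lemma conjClass_rotate (u : List (Fin 2)) (k : ℕ) : conjClass (u.rotate k) = conjClass u := by
  ext v
  constructor
  · rintro ⟨i, rfl⟩
    exact ⟨k + i, by rw [List.rotate_rotate]⟩
  · rintro ⟨j, rfl⟩
    rcases eq_or_ne u.length 0 with h0 | h0
    · have : u = [] := List.length_eq_zero_iff.mp h0
      subst this
      exact ⟨0, by simp⟩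
    · have hL : 0 < u.length := Nat.pos_of_ne_zero h0
      refine ⟨j + (u.length - k % u.length), ?_⟩
      rw [List.rotate_rotate]
      have hq : u.length * (k / u.length) + k % u.length = k := Nat.div_add_mod k u.length
      have hr : k % u.length < u.length := Nat.mod_lt _ hL
      have hidx : k + (j + (u.length - k % u.length))
          = j + u.length * (k / u.length + 1) := by
        rw [Nat.mul_add, Nat.mul_one]
        set a := u.length * (k / u.length) with ha
        omega
      rw [hidx, rotate_add_mul]

end SturmianAux

open SturmianAux
/-- For a Sturmian word `s`, the Lie complexity is at most `2`. -/
theorem lieComplexity_sturmian_le_two (s : ℕ → Fin 2)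
    (hs : ∀ n : ℕ, factorComplexity s n = n + 1) :
    ∀ n : ℕ, 1 ≤ n → lieComplexity s n ≤ 2 := by
  intro n hn
  obtain ⟨m, rfl⟩ : ∃ m, n = m + 1 := ⟨n - 1, by omega⟩
  classical
  set S := {C : Set (List (Fin 2)) | ∃ u : List (Fin 2), u.length = m + 1 ∧
    (∀ i : ℕ, IsFactor s (u.rotate i)) ∧ C = conjClass u} with hS
  have key : ∀ C ∈ S, ∃ (b : Fin 2) (t : List (Fin 2)),
      t.length = m ∧ RS s t ∧ C = conjClass (t ++ [b]) := by
    rintro C ⟨u, hlen, hrot, rfl⟩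
    obtain ⟨k, hk⟩ := not_all_det s hs u hlen hrot
    push_neg at hk
    obtain ⟨b, c, hfb, hfc, hbc⟩ := hk
    have hlenr : (u.rotate k).length = m + 1 := by simp [hlen]
    have hne : u.rotate k ≠ [] := by intro h; rw [h] at hlenr; simp at hlenr
    have hlast : (u.rotate k).take m ++ [(u.rotate k).getLast hne] = u.rotate k := by
      conv_rhs => rw [← List.dropLast_append_getLast hne]
      congr 1
      rw [List.dropLast_eq_take, hlenr]
      simp
    refine ⟨(u.rotate k).getLast hne, (u.rotate k).take m, ?_, ⟨b, c, hbc, hfb, hfc⟩, ?_⟩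
    · rw [List.length_take, hlenr]; omega
    · rw [hlast, conjClass_rotate]
  set f : Set (List (Fin 2)) → Fin 2 := fun C =>
    if h : ∃ (b : Fin 2) (t : List (Fin 2)),
        t.length = m ∧ RS s t ∧ C = conjClass (t ++ [b]) then h.choose else 0 with hf
  have hinj : Set.InjOn f S := by
    intro C hC C' hC' hff
    have h := key C hC
    have h' := key C' hC'
    have e1 : f C = h.choose := dif_pos h
    have e2 : f C' = h'.choose := dif_pos h'
    obtain ⟨t, ht, hrs, hCe⟩ := h.choose_spec
    obtain ⟨t', ht', hrs', hCe'⟩ := h'.choose_spec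
    have htt : t = t' := rs_unique s hs ht ht' hrs hrs'
    have hbb : h.choose = h'.choose := by rw [← e1, ← e2, hff]
    rw [hCe, hCe', htt, hbb]
  have hle : S.ncard ≤ (Set.univ : Set (Fin 2)).ncard :=
    Set.ncard_le_ncard_of_injOn f (fun a _ => Set.mem_univ (f a)) hinj Set.finite_univ
  have huniv : (Set.univ : Set (Fin 2)).ncard = 2 := by
    rw [Set.ncard_univ]
    simp [Nat.card_eq_fintype_card]
  calc lieComplexity s (m + 1) = S.ncard := rfl
    _ ≤ 2 := by omega
end

section
/- Let w be a right-infinite word and n ≥ 1. The Lie classes of factors of w of length n are in bijection with the cycles in the Rauzy graph Γ_w(n) whose lengths divide n. -/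
/-- `c` is (the edge list of) a simple cycle in the Rauzy graph `Γ_w(n)`:
its entries are factors of `w` of length `n` (the edges), the target vertex
(length-`(n-1)` suffix) of each edge is the source vertex (length-`(n-1)` prefix)
of the next one, cyclically, and the visited vertices are pairwise distinct. -/
def IsRauzyCycle {α : Type*} (w : ℕ → α) (n : ℕ) (c : List (List α)) : Prop :=
  c ≠ [] ∧ (∀ u ∈ c, u.length = n ∧ IsFactor w u) ∧
  (∀ i : ℕ, i < c.length →
    (c.getD i []).tail = (c.getD ((i + 1) % c.length) []).dropLast) ∧
  (c.map List.dropLast).Nodup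

namespace RauzyAux
variable {α : Type*}

lemma tail_eq_rotate_dropLast (v : List α) (hv : v ≠ []) :
    v.tail = (v.rotate 1).dropLast := by
  cases v with
  | nil => exact absurd rfl hv
  | cons x xs =>
    have h1 : (x :: xs).rotate 1 = xs ++ [x] := by
      simpa using List.rotate_cons_succ xs x 0
    simp [h1]

lemma rotate_mul (u : List α) (p : ℕ) (hp : u.rotate p = u) :
    ∀ k, u.rotate (k * p) = u := by
  intro k
  induction k with
  | zero => simp
  | succ k ih =>
    have h : (u.rotate (k * p)).rotate p = u.rotate (k * p + p) := List.rotate_rotate u (k*p) p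
    rw [Nat.succ_mul, ← h, ih, hp]

lemma rotate_mod_period (u : List α) (p : ℕ) (hp : u.rotate p = u) (m : ℕ) :
    u.rotate m = u.rotate (m % p) := by
  conv_lhs => rw [← Nat.div_add_mod m p]
  rw [← List.rotate_rotate, mul_comm p (m / p), rotate_mul u p hp]

lemma eq_of_perm_dropLast {x y : List α} (hperm : x.Perm y) (hx : x ≠ []) (hy : y ≠ [])
    (h : x.dropLast = y.dropLast) : x = y := by
  have hx' := List.dropLast_append_getLast hx
  have hy' := List.dropLast_append_getLast hy
  have h2 : (x.dropLast ++ [x.getLast hx]).Perm (x.dropLast ++ [y.getLast hy]) := by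
    rw [hx']
    conv_rhs => rw [h, hy']
    exact hperm
  have h3 : x.getLast hx = y.getLast hy := by
    simpa using (List.perm_append_left_iff _).mp h2
  rw [← hx', ← hy', h, h3]

lemma forward (w : ℕ → α) (n : ℕ) (hn : 1 ≤ n) (u : List α) (hu : u.length = n)
    (hfac : ∀ i, IsFactor w (u.rotate i)) :
    ∃ c : List (List α), IsRauzyCycle w n c ∧ c.length ∣ n ∧ conjClass u = {x | x ∈ c} := by
  classical
  have hune : u ≠ [] := List.ne_nil_of_length_pos (by rw [hu]; omega)
  have hrotne : ∀ k, u.rotate k ≠ [] := fun k =>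
    List.ne_nil_of_length_pos (by rw [List.length_rotate, hu]; omega)
  have hun : u.rotate n = u := by rw [← hu]; exact List.rotate_length u
  have hex : ∃ p, 0 < p ∧ u.rotate p = u := ⟨n, hn, hun⟩
  set p := Nat.find hex with hpdef
  obtain ⟨hp0, hpu⟩ := Nat.find_spec hex
  have hmin : ∀ q, 0 < q → q < p → u.rotate q ≠ u := by
    intro q hq0 hqp h
    exact Nat.find_min hex hqp ⟨hq0, h⟩
  have hpn : p ≤ n := Nat.find_min' hex ⟨hn, hun⟩
  have hdvd : p ∣ n := by
    have hmod : u.rotate (n % p) = u := by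
      rw [← rotate_mod_period u p hpu n, hun]
    rcases Nat.eq_zero_or_pos (n % p) with h0 | hpos
    · exact Nat.dvd_of_mod_eq_zero h0
    · exact absurd hmod (hmin _ hpos (Nat.mod_lt n hp0))
  -- rotate is injective (on dropLast) on [0, p)
  have hrotinj : ∀ i j, i < p → j < p →
      (u.rotate i).dropLast = (u.rotate j).dropLast → i = j := by
    have key : ∀ i j, i ≤ j → j < p →
        (u.rotate i).dropLast = (u.rotate j).dropLast → i = j := by
      intro i j hij hjp h
      have hperm : (u.rotate i).Perm (u.rotate j) :=
        (List.rotate_perm u i).trans (List.rotate_perm u j).symm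
      have heq : u.rotate i = u.rotate j :=
        eq_of_perm_dropLast hperm (hrotne i) (hrotne j) h
      have h1 : u.rotate (i + (n - i)) = u.rotate (j + (n - i)) := by
        rw [← List.rotate_rotate, ← List.rotate_rotate, heq]
      have e1 : i + (n - i) = n := by omega
      have e2 : j + (n - i) = (j - i) + n := by omega
      rw [e1, e2, hun] at h1
      have h2 : u.rotate (j - i) = u := by
        rw [rotate_mod_period u n hun (j - i + n)] at h1
        have e3 : (j - i + n) % n = (j - i) % n := Nat.add_mod_right _ _
        have e4 : (j - i) % n = j - i := Nat.mod_eq_of_lt (by omega)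
        rw [e3, e4] at h1
        exact h1.symm
      by_contra hne2
      exact hmin (j - i) (by omega) (by omega) h2
    intro i j hi hj h
    rcases le_total i j with hij | hij
    · exact key i j hij hj h
    · exact (key j i hij hi h.symm).symm
  set c := (List.range p).map (fun i => u.rotate i) with hcdef
  have hclen : c.length = p := by simp [hcdef]
  have hget : ∀ i, i < p → c.getD i [] = u.rotate i := by
    intro i hi
    have hi' : i < c.length := by rw [hclen]; exact hi
    rw [List.getD_eq_getElem _ _ hi']
    simp [hcdef]
  have hmemc : ∀ x, x ∈ c ↔ ∃ i, i < p ∧ x = u.rotate i := by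
    intro x
    simp only [hcdef, List.mem_map, List.mem_range]
    constructor
    · rintro ⟨i, hi, rfl⟩; exact ⟨i, hi, rfl⟩
    · rintro ⟨i, hi, rfl⟩; exact ⟨i, hi, rfl⟩
  refine ⟨c, ⟨?_, ?_, ?_, ?_⟩, by rw [hclen]; exact hdvd, ?_⟩
  · intro h; rw [h] at hclen; simp at hclen; omega
  · intro x hx
    obtain ⟨i, _, rfl⟩ := (hmemc x).mp hx
    exact ⟨by rw [List.length_rotate]; exact hu, hfac i⟩
  · intro i hi
    rw [hclen] at hi
    have hi1 : (i + 1) % p < p := Nat.mod_lt _ hp0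
    rw [hclen, hget i hi, hget _ hi1]
    rw [tail_eq_rotate_dropLast _ (hrotne i), List.rotate_rotate]
    congr 1
    exact rotate_mod_period u p hpu (i + 1)
  · rw [hcdef, List.map_map]
    apply List.Nodup.map_on _ (List.nodup_range (n := p))
    intro i hi j hj h
    simp only [List.mem_range] at hi hj
    exact hrotinj i j hi hj h
  · ext x
    simp only [conjClass, Set.mem_setOf_eq, hmemc]
    constructor
    · rintro ⟨i, rfl⟩
      exact ⟨i % p, Nat.mod_lt _ hp0, rotate_mod_period u p hpu i⟩
    · rintro ⟨i, _, rfl⟩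
      exact ⟨i, rfl⟩

lemma backward (w : ℕ → α) (n : ℕ) (hn : 1 ≤ n) (c : List (List α))
    (hc : IsRauzyCycle w n c) (hdvd : c.length ∣ n) :
    ∃ u : List α, u.length = n ∧ (∀ i, IsFactor w (u.rotate i)) ∧
      conjClass u = {x | x ∈ c} := by
  obtain ⟨hne, hmem, hstep, _⟩ := hc
  set p := c.length with hp
  have hp0 : 0 < p := List.length_pos_iff.mpr hne
  set d : α := w 0 with hd
  set a : ℕ → α := fun m => (c.getD (m % p) []).getD 0 d with ha
  have hmemD : ∀ i, i < p → c.getD i [] ∈ c := by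
    intro i hi
    rw [List.getD_eq_getElem _ _ hi]
    exact List.getElem_mem hi
  have hlenD : ∀ i, i < p → (c.getD i []).length = n := fun i hi => (hmem _ (hmemD i hi)).1
  have amod : ∀ m, a (m % p) = a m := by
    intro m
    simp only [ha]
    rw [Nat.mod_mod_of_dvd m dvd_rfl]
  have key : ∀ j, j < n → ∀ i, i < p → (c.getD i []).getD j d = a (i + j) := by
    intro j
    induction j with
    | zero =>
      intro _ i hi
      simp only [ha, Nat.add_zero]
      rw [Nat.mod_eq_of_lt hi]
    | succ j ih =>
      intro hj i hi
      have hi1 : (i + 1) % p < p := Nat.mod_lt _ hp0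
      have htail : ∀ l : List α, l.tail.getD j d = l.getD (j+1) d := by
        intro l; cases l <;> simp
      rw [← htail, hstep i hi]
      have hlen1 : (c.getD ((i+1) % p) []).length = n := hlenD _ hi1
      have hjlt : j < (c.getD ((i+1) % p) []).dropLast.length := by
        rw [List.length_dropLast, hlen1]; omega
      have hjlt2 : j < (c.getD ((i+1) % p) []).length := by rw [hlen1]; omega
      rw [List.getD_eq_getElem _ _ hjlt, List.getElem_dropLast,
        ← List.getD_eq_getElem _ d hjlt2]
      rw [ih (by omega) _ hi1]
      have e1 : ((i+1) % p + j) % p = (i + (j+1)) % p := by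
        conv_rhs => rw [show i + (j+1) = (i+1) + j by omega]
        conv_lhs => rw [Nat.add_mod]
        conv_rhs => rw [Nat.add_mod]
        rw [Nat.mod_mod_of_dvd (i+1) dvd_rfl]
      rw [← amod ((i+1) % p + j), e1, amod]
  set u := c.getD 0 [] with hu
  have hulen : u.length = n := hlenD 0 hp0
  have hrot : ∀ k, u.rotate k = c.getD (k % p) [] := by
    intro k
    have hkp : k % p < p := Nat.mod_lt _ hp0
    apply List.ext_getElem
    · rw [List.length_rotate, hulen, hlenD _ hkp]
    · intro j h1 h2
      have hjn : j < n := by rwa [List.length_rotate, hulen] at h1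
      have hmodn : (j + k) % n < n := Nat.mod_lt _ (by omega)
      have hmodu : (j + k) % u.length < u.length := by rw [hulen]; exact hmodn
      rw [List.getElem_rotate]
      have main : u.getD ((j + k) % n) d = (c.getD (k % p) []).getD j d := by
        have k1 := key ((j + k) % n) hmodn 0 hp0
        rw [← hu] at k1
        rw [k1, key j hjn (k % p) hkp]
        rw [Nat.zero_add]
        have e : (j + k) % n % p = (k % p + j) % p := by
          rw [Nat.mod_mod_of_dvd _ hdvd]
          conv_rhs => rw [Nat.add_mod, Nat.mod_mod_of_dvd k dvd_rfl, ← Nat.add_mod,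
            Nat.add_comm k j]
        calc a ((j + k) % n) = a ((j + k) % n % p) := (amod _).symm
          _ = a ((k % p + j) % p) := by rw [e]
          _ = a (k % p + j) := amod _
      rw [List.getD_eq_getElem u d (show (j + k) % n < u.length by rw [hulen]; exact hmodn),
        List.getD_eq_getElem _ d (show j < (c.getD (k % p) []).length by rw [hlenD _ hkp]; exact hjn)] at main
      simp only [hulen]
      exact main
  refine ⟨u, hulen, ?_, ?_⟩
  · intro k
    rw [hrot k]
    exact (hmem _ (hmemD _ (Nat.mod_lt _ hp0))).2
  · ext x
    simp only [conjClass, Set.mem_setOf_eq]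
    constructor
    · rintro ⟨i, rfl⟩
      rw [hrot i]
      exact hmemD _ (Nat.mod_lt _ hp0)
    · intro hx
      obtain ⟨i, hi, rfl⟩ := List.mem_iff_getElem.mp hx
      refine ⟨i, ?_⟩
      rw [hrot i, Nat.mod_eq_of_lt hi, List.getD_eq_getElem _ _ hi]

end RauzyAux

/-- The Lie classes of factors of length `n` of `w` are in bijection with the
(edge sets of the) cycles of the Rauzy graph `Γ_w(n)` whose lengths divide `n`. -/
theorem lieClasses_equiv_rauzy_cycles {α : Type*} (w : ℕ → α) (n : ℕ) (hn : 1 ≤ n) :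
    Nonempty
      (↥{C : Set (List α) | ∃ u : List α, u.length = n ∧
          (∀ i : ℕ, IsFactor w (u.rotate i)) ∧ C = conjClass u} ≃
       ↥{E : Set (List α) | ∃ c : List (List α),
          IsRauzyCycle w n c ∧ c.length ∣ n ∧ E = {u | u ∈ c}}) := by
  refine ⟨Equiv.setCongr ?_⟩
  ext E
  simp only [Set.mem_setOf_eq]
  constructor
  · rintro ⟨u, hlen, hfac, rfl⟩
    obtain ⟨c, hc, hd, hE⟩ := RauzyAux.forward w n hn u hlen hfac
    exact ⟨c, hc, hd, hE⟩
  · rintro ⟨c, hc, hd, rfl⟩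
    obtain ⟨u, h1, h2, h3⟩ := RauzyAux.backward w n hn c hc hd
    exact ⟨u, h1, h2, h3.symm⟩
end

section
/- Let w be a right-infinite word, n ≥ 1, d a divisor of n, and suppose u_1, …, u_d are the consecutive edges of a cycle of length d in the Rauzy graph Γ_w(n). Then u_1, …, u_d all have period d, and they are exactly the d cyclic shifts of u_1. -/
/-- If `u 0, …, u (d-1)` are the consecutive edges of a cycle of length `d` in the
Rauzy graph `Γ_w(n)` with `d ∣ n`, then each `u i` has period `d` and the `u i` are
exactly the `d` cyclic shifts of `u 0`. -/
theorem rauzy_cycle_edges_are_shifts {α : Type*} (w : ℕ → α) (n d : ℕ)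
    (hn : 1 ≤ n) (hd : 0 < d) (hdvd : d ∣ n) (u : Fin d → List α)
    (hlen : ∀ i : Fin d, (u i).length = n)
    (hfac : ∀ i : Fin d, IsFactor w (u i))
    (hchain : ∀ i : Fin d,
      (u i).tail = (u ⟨(i.val + 1) % d, Nat.mod_lt _ hd⟩).dropLast)
    (hdistinct : Function.Injective fun i : Fin d => (u i).dropLast) :
    (∀ i : Fin d, ∀ j : ℕ, j + d < n → (u i)[j]? = (u i)[j + d]?) ∧
    (∀ i : Fin d, u i = (u ⟨0, hd⟩).rotate i.val) ∧
    (∀ v : List α, (∃ i : Fin d, v = u i) ↔ ∃ j : ℕ, j < d ∧ v = (u ⟨0, hd⟩).rotate j) := by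
  have key : ∀ j : ℕ, j < n → ∀ i : Fin d,
      (u i)[j]? = (u ⟨(i.val + j) % d, Nat.mod_lt _ hd⟩)[0]? := by
    intro j
    induction j with
    | zero =>
      intro _ i
      congr 1
      · congr 1
        exact Fin.ext (by simpa using (Nat.mod_eq_of_lt i.isLt).symm)
    | succ j ih =>
      intro hj i
      have h1 : (u i)[j+1]? = (u i).tail[j]? := by
        rw [← List.drop_one, List.getElem?_drop]; ring_nf
      set i2 : Fin d := ⟨(i.val + 1) % d, Nat.mod_lt _ hd⟩ with hi2
      have h2 : (u i).tail[j]? = (u i2).dropLast[j]? := by rw [hchain i]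
      have h3 : (u i2).dropLast[j]? = (u i2)[j]? := by
        rw [List.getElem?_eq_getElem (by simp [hlen i2]; omega),
          List.getElem?_eq_getElem (by rw [hlen i2]; omega), List.getElem_dropLast]
      have h4 := ih (by omega) i2
      have h5 : ((i.val + 1) % d + j) % d = (i.val + (j + 1)) % d := by
        rw [Nat.mod_add_mod]
        congr 1
        omega
      rw [h1, h2, h3, h4]
      congr 2
      exact Fin.ext h5
  have hper : ∀ i : Fin d, ∀ j : ℕ, j + d < n → (u i)[j]? = (u i)[j + d]? := by
    intro i j hjd
    rw [key j (by omega) i, key (j + d) (by omega) i]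
    congr 2
    exact Fin.ext (by simp [← Nat.add_assoc, Nat.add_mod_right])
  have hrot : ∀ i : Fin d, u i = (u ⟨0, hd⟩).rotate i.val := by
    intro i
    apply List.ext_getElem?
    intro j
    rcases lt_or_ge j n with hj | hj
    · have hml : j < (u ⟨0, hd⟩).length := by rw [hlen]; exact hj
      rw [List.getElem?_rotate hml, key j hj i]
      have hm : (j + i.val) % n < n := Nat.mod_lt _ (by omega)
      rw [hlen, key _ hm ⟨0, hd⟩]
      congr 2
      apply Fin.ext
      show (i.val + j) % d = (0 + (j + i.val) % n) % d
      rw [Nat.zero_add, Nat.mod_mod_of_dvd _ hdvd, Nat.add_comm]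
    · rw [List.getElem?_eq_none (by rw [hlen]; exact hj),
        List.getElem?_eq_none (by rw [List.length_rotate, hlen]; exact hj)]
  refine ⟨hper, hrot, ?_⟩
  intro v
  constructor
  · rintro ⟨i, rfl⟩
    exact ⟨i.val, i.isLt, hrot i⟩
  · rintro ⟨j, hj, rfl⟩
    exact ⟨⟨j, hj⟩, (hrot ⟨j, hj⟩).symm⟩
end

section
/- Two Sturmian words with the same slope α have exactly the same set of factors. -/
/-- The Sturmian word of slope `a` and intercept `ρ`. -/
noncomputable def sturmianWord (a ρ : ℝ) (n : ℕ) : ℤ :=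
  ⌊a * (n + 1) + ρ⌋ - ⌊a * n + ρ⌋

private lemma fract_pos_of_irrational (a : ℝ) (ha : Irrational a) {m : ℕ} (hm : m ≠ 0) :
    0 < Int.fract (a * m) := by
  rw [Int.fract_pos]
  intro h
  have h2 : Irrational (a * m) := by rw [mul_comm]; exact ha.natCast_mul hm
  exact h2.ne_int ⌊a * (m:ℝ)⌋ h

private lemma exists_small_step (a : ℝ) (ha : Irrational a) {ε : ℝ} (hε : 0 < ε) :
    ∃ m : ℕ, m ≠ 0 ∧ 0 < Int.fract (a * m) ∧ Int.fract (a * m) < ε := by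
  set N : ℕ := ⌈1/ε⌉₊ + 1 with hN
  have hN0 : 0 < (N:ℝ) := by positivity
  have hN2 : (2:ℕ) ≤ N := by
    have : 1 ≤ ⌈1/ε⌉₊ := Nat.one_le_ceil_iff.mpr (by positivity)
    omega
  have hNε : 1/(N:ℝ) < ε := by
    rw [div_lt_iff₀ hN0]
    have h1 : (1/ε : ℝ) < N := by
      calc (1/ε : ℝ) ≤ ⌈1/ε⌉₊ := Nat.le_ceil _
      _ < N := by exact_mod_cast Nat.lt_succ_self _
    calc (1:ℝ) = ε * (1/ε) := by field_simp
    _ < ε * N := by exact mul_lt_mul_of_pos_left h1 hε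
  -- key step: from a near-collision, produce a small positive fractional part
  have key : ∀ m1 m2 : ℕ, m2 < m1 →
      |Int.fract (a * m1) - Int.fract (a * m2)| < 1/N →
      ∃ m : ℕ, m ≠ 0 ∧ 0 < Int.fract (a * m) ∧ Int.fract (a * m) < ε := by
    intro m1 m2 hlt habs
    set d : ℝ := Int.fract (a * m1) - Int.fract (a * m2) with hd
    set M : ℕ := m1 - m2 with hM
    have hM0 : M ≠ 0 := by omega
    have hfM : Int.fract (a * M) = Int.fract d := by
      apply Int.fract_eq_fract.mpr
      refine ⟨⌊a * (m1:ℝ)⌋ - ⌊a * (m2:ℝ)⌋, ?_⟩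
      have hcast : ((M:ℕ) : ℝ) = (m1:ℝ) - (m2:ℝ) := by
        rw [hM]; push_cast [Nat.cast_sub hlt.le]; ring
      rw [hcast, hd]
      simp only [Int.fract]
      push_cast
      ring
    have hMpos : 0 < Int.fract (a * M) := fract_pos_of_irrational a ha hM0
    have hd1 : d < 1 := by
      have := Int.fract_lt_one (a * (m1:ℝ)); have := Int.fract_nonneg (a * (m2:ℝ)); rw [hd]; linarith
    have hd1' : -1 < d := by
      have := Int.fract_nonneg (a * (m1:ℝ)); have := Int.fract_lt_one (a * (m2:ℝ)); rw [hd]; linarith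
    rcases lt_trichotomy d 0 with hneg | hzero | hpos
    · -- d < 0 : fract d = 1 + d ∈ (1 - 1/N, 1), apply the k-trick
      have hfd : Int.fract d = d + 1 := by
        rw [← Int.fract_add_one d]
        exact Int.fract_eq_self.mpr ⟨by linarith, by linarith⟩
      set e : ℝ := d + 1 with he
      have heN : 1 - 1/N < e := by
        have := (abs_lt.mp habs).1
        linarith
      have he1 : e < 1 := by linarith
      set δ : ℝ := 1 - e with hδ
      have hδ0 : 0 < δ := by linarith
      have hδN : δ < 1/N := by linarith
      have hδ1 : δ < 1 := by
        have : (1:ℝ)/N ≤ 1 := by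
          rw [div_le_one hN0]; exact_mod_cast Nat.one_le_iff_ne_zero.mpr (by omega)
        linarith
      set k : ℕ := ⌈1/δ⌉₊ - 1 with hk
      have hceil2 : 2 ≤ ⌈1/δ⌉₊ := by
        have h1 : ((1:ℕ):ℝ) < 1/δ := by
          push_cast; rw [lt_div_iff₀ hδ0]; linarith
        have h2 : (1:ℕ) < ⌈1/δ⌉₊ := Nat.lt_ceil.mpr h1
        omega
      have hk1 : 1 ≤ k := by omega
      have hkcast : (k:ℝ) = (⌈1/δ⌉₊ : ℝ) - 1 := by
        rw [hk]; push_cast [Nat.cast_sub (by omega : 1 ≤ ⌈1/δ⌉₊)]; ring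
      have hkδ1 : (k:ℝ) * δ < 1 := by
        have h1 : (⌈1/δ⌉₊:ℝ) < 1/δ + 1 := Nat.ceil_lt_add_one (by positivity)
        have h2 : (k:ℝ) < 1/δ := by rw [hkcast]; linarith
        calc (k:ℝ) * δ < (1/δ) * δ := by exact mul_lt_mul_of_pos_right h2 hδ0
        _ = 1 := by field_simp
      have hkδ2 : 1 ≤ ((k:ℝ) + 1) * δ := by
        have h1 : (1/δ : ℝ) ≤ ⌈1/δ⌉₊ := Nat.le_ceil _
        have h2 : (1/δ : ℝ) ≤ (k:ℝ) + 1 := by rw [hkcast]; linarith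
        calc (1:ℝ) = (1/δ) * δ := by field_simp
        _ ≤ ((k:ℝ)+1) * δ := by exact mul_le_mul_of_nonneg_right h2 hδ0.le
      have hkδpos : 0 < (k:ℝ) * δ := by
        have : (0:ℝ) < (k:ℝ) := by exact_mod_cast hk1
        positivity
      refine ⟨k * M, by positivity, ?_⟩
      have hstep1 : Int.fract (a * ((k*M : ℕ):ℝ)) = Int.fract ((k:ℝ) * e) := by
        apply Int.fract_eq_fract.mpr
        refine ⟨(k:ℤ) * ⌊a * (M:ℝ)⌋, ?_⟩
        have h1 : Int.fract (a * (M:ℝ)) = e := by rw [hfM, hfd]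
        have h2 : a * (M:ℝ) = (⌊a * (M:ℝ)⌋ : ℝ) + e := by
          rw [← h1, Int.floor_add_fract]
        push_cast
        linear_combination (k:ℝ) * h2
      have hstep2 : Int.fract ((k:ℝ) * e) = Int.fract (-((k:ℝ) * δ)) := by
        apply Int.fract_eq_fract.mpr
        exact ⟨(k:ℤ), by push_cast; rw [hδ]; ring⟩
      have hstep3 : Int.fract (-((k:ℝ) * δ)) = 1 - (k:ℝ) * δ := by
        have hself : Int.fract ((k:ℝ) * δ) = (k:ℝ) * δ :=
          Int.fract_eq_self.mpr ⟨hkδpos.le, hkδ1⟩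
        rw [Int.fract_neg (by rw [hself]; exact hkδpos.ne'), hself]
      rw [hstep1, hstep2, hstep3]
      constructor
      · linarith
      · have : 1 - (k:ℝ) * δ ≤ δ := by nlinarith
        linarith
    · exfalso
      rw [hzero, Int.fract_zero] at hfM
      exact hMpos.ne' hfM
    · -- d > 0 : fract d = d < 1/N < ε
      have hfd : Int.fract d = d := Int.fract_eq_self.mpr ⟨hpos.le, hd1⟩
      refine ⟨M, hM0, hMpos, ?_⟩
      rw [hfM, hfd]
      have := (abs_lt.mp habs).2
      linarith
  -- pigeonhole
  obtain ⟨m1, hm1, m2, hm2, hne, heq⟩ :=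
    Finset.exists_ne_map_eq_of_card_lt_of_maps_to
      (s := Finset.range (N+1)) (t := Finset.range N)
      (by simp)
      (fun m _ => Finset.mem_range.mpr ((Nat.floor_lt
        (mul_nonneg (Nat.cast_nonneg N) (Int.fract_nonneg (a * (m:ℝ))))).mpr
        (by
          have h1 : Int.fract (a * (m:ℝ)) < 1 := Int.fract_lt_one _
          calc (N:ℝ) * Int.fract (a * (m:ℝ)) < (N:ℝ) * 1 := by
                exact mul_lt_mul_of_pos_left h1 hN0
            _ = (N:ℝ) := by ring)))
  have habs : ∀ p q : ℕ,
      ⌊(N:ℝ) * Int.fract (a * p)⌋₊ = ⌊(N:ℝ) * Int.fract (a * q)⌋₊ →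
      |Int.fract (a * p) - Int.fract (a * q)| < 1/N := by
    intro p q hpq
    have h1 : (⌊(N:ℝ) * Int.fract (a * p)⌋₊ : ℝ) ≤ (N:ℝ) * Int.fract (a * p) :=
      Nat.floor_le (mul_nonneg (Nat.cast_nonneg N) (Int.fract_nonneg _))
    have h2 : (N:ℝ) * Int.fract (a * p) < ⌊(N:ℝ) * Int.fract (a * p)⌋₊ + 1 :=
      Nat.lt_floor_add_one _
    have h3 : (⌊(N:ℝ) * Int.fract (a * q)⌋₊ : ℝ) ≤ (N:ℝ) * Int.fract (a * q) :=
      Nat.floor_le (mul_nonneg (Nat.cast_nonneg N) (Int.fract_nonneg _))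
    have h4 : (N:ℝ) * Int.fract (a * q) < ⌊(N:ℝ) * Int.fract (a * q)⌋₊ + 1 :=
      Nat.lt_floor_add_one _
    rw [hpq] at h1 h2
    have e1 : Int.fract (a * (q:ℝ)) - Int.fract (a * (p:ℝ)) < 1/N :=
      (lt_div_iff₀ hN0).mpr (by nlinarith)
    have e2 : Int.fract (a * (p:ℝ)) - Int.fract (a * (q:ℝ)) < 1/N :=
      (lt_div_iff₀ hN0).mpr (by nlinarith)
    rw [abs_lt]
    constructor <;> linarith
  rcases hne.lt_or_gt with hlt | hlt
  · exact key m2 m1 hlt (habs m2 m1 heq.symm)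
  · exact key m1 m2 hlt (habs m1 m2 heq)

private lemma nat_orbit_dense (a : ℝ) (ha : Irrational a) (t : ℝ) {ε : ℝ}
    (ht0 : 0 ≤ t) (ht1 : t < 1) (hε : 0 < ε) :
    ∃ n : ℕ, |Int.fract (a * n) - t| < ε := by
  obtain ⟨m, hm0, hs0, hsε⟩ := exists_small_step a ha hε
  set s : ℝ := Int.fract (a * m) with hs
  set j : ℕ := ⌊t / s⌋₊ with hj
  have hjle : (j:ℝ) * s ≤ t := by
    have h1 : (j:ℝ) ≤ t / s := Nat.floor_le (div_nonneg ht0 hs0.le)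
    calc (j:ℝ) * s ≤ (t/s) * s := mul_le_mul_of_nonneg_right h1 hs0.le
    _ = t := by field_simp
  have hjlt : t < ((j:ℝ) + 1) * s := by
    have h1 : t / s < (j:ℝ) + 1 := Nat.lt_floor_add_one _
    calc t = (t/s) * s := by field_simp
    _ < ((j:ℝ)+1) * s := mul_lt_mul_of_pos_right h1 hs0
  refine ⟨j * m, ?_⟩
  have hfr : Int.fract (a * ((j*m : ℕ):ℝ)) = (j:ℝ) * s := by
    have h1 : Int.fract (a * ((j*m:ℕ):ℝ)) = Int.fract ((j:ℝ) * s) := by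
      apply Int.fract_eq_fract.mpr
      refine ⟨(j:ℤ) * ⌊a * (m:ℝ)⌋, ?_⟩
      have h2 : a * (m:ℝ) = (⌊a * (m:ℝ)⌋ : ℝ) + s := by rw [hs, Int.floor_add_fract]
      push_cast
      linear_combination (j:ℝ) * h2
    rw [h1]
    apply Int.fract_eq_self.mpr
    constructor
    · positivity
    · linarith
  rw [hfr, abs_lt]
  constructor <;> nlinarith

private lemma fract_orbit_dense (a : ℝ) (ha : Irrational a) (ρ' : ℝ) {c d : ℝ}
    (hc : 0 ≤ c) (hcd : c < d) (hd : d ≤ 1) :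
    ∃ n : ℕ, c < Int.fract (a * n + ρ') ∧ Int.fract (a * n + ρ') < d := by
  set mid : ℝ := (c + d) / 2 with hmid
  have hmid0 : 0 < mid := by rw [hmid]; linarith
  have hmid1 : mid < 1 := by rw [hmid]; linarith
  set ε : ℝ := min (min mid (1 - mid)) ((d - c)/2) with hε
  have hε0 : 0 < ε := by
    rw [hε]
    apply lt_min (lt_min hmid0 (by linarith)) (by linarith)
  have hε1 : ε ≤ mid := le_trans (min_le_left _ _) (min_le_left _ _)
  have hε2 : ε ≤ 1 - mid := le_trans (min_le_left _ _) (min_le_right _ _)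
  have hε3 : ε ≤ (d - c)/2 := min_le_right _ _
  set t : ℝ := Int.fract (mid - ρ') with ht
  obtain ⟨n, hn⟩ := nat_orbit_dense a ha t (Int.fract_nonneg _) (Int.fract_lt_one _) hε0
  refine ⟨n, ?_⟩
  set s : ℝ := Int.fract (a * n) with hs
  have h1 : Int.fract (a * (n:ℝ) + ρ') = Int.fract (s + ρ') := by
    apply Int.fract_eq_fract.mpr
    refine ⟨⌊a * (n:ℝ)⌋, ?_⟩
    have hss := Int.fract_sub_self (a * (n:ℝ))
    rw [hs]; linarith
  have h2 : Int.fract (t + ρ') = mid := by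
    have h3 : Int.fract (t + ρ') = Int.fract mid := by
      apply Int.fract_eq_fract.mpr
      refine ⟨-⌊mid - ρ'⌋, ?_⟩
      have hss := Int.fract_sub_self (mid - ρ')
      rw [ht]; push_cast; linarith
    rw [h3]
    exact Int.fract_eq_self.mpr ⟨hmid0.le, hmid1.le.lt_of_ne (by intro h; exact hmid1.ne h)⟩
  have hK : t + ρ' = (⌊t + ρ'⌋ : ℝ) + mid := by
    conv_lhs => rw [← Int.floor_add_fract (t + ρ')]
    rw [h2]
  have habs := abs_lt.mp hn
  have hfloor : ⌊s + ρ'⌋ = ⌊t + ρ'⌋ := by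
    rw [Int.floor_eq_iff]
    constructor
    · nlinarith
    · push_cast; nlinarith
  have hfr : Int.fract (s + ρ') = mid + (s - t) := by
    rw [Int.fract, hfloor]
    nlinarith [hK]
  rw [h1, hfr]
  constructor <;> nlinarith

private lemma sturmian_shift (a ρ : ℝ) (i j : ℕ) :
    sturmianWord a ρ (i + j) =
      ⌊a * ((j:ℝ) + 1) + Int.fract (a * i + ρ)⌋ - ⌊a * (j:ℝ) + Int.fract (a * i + ρ)⌋ := by
  have key : ∀ c : ℝ, ⌊c + (a * i + ρ)⌋ = ⌊c + Int.fract (a * i + ρ)⌋ + ⌊a * (i:ℝ) + ρ⌋ := by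
    intro c
    conv_lhs => rw [show c + (a * (i:ℝ) + ρ)
      = (c + Int.fract (a * i + ρ)) + (⌊a * (i:ℝ) + ρ⌋ : ℝ) by
        have hss := Int.fract_sub_self (a * (i:ℝ) + ρ); linarith]
    rw [Int.floor_add_intCast]
  unfold sturmianWord
  have e1 : a * ((↑(i+j) : ℝ) + 1) + ρ = a * ((j:ℝ) + 1) + (a * i + ρ) := by push_cast; ring
  have e2 : a * ((↑(i+j) : ℝ)) + ρ = a * (j:ℝ) + (a * i + ρ) := by push_cast; ring
  rw [e1, e2, key, key]
  ring

private lemma floor_eq_floor (a : ℝ) {x y : ℝ} (hx : 0 ≤ x) (hx1 : x < 1)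
    (hy : 0 ≤ y) (hy1 : y < 1) (j : ℕ)
    (h : 1 - Int.fract (a * j) ≤ x ↔ 1 - Int.fract (a * j) ≤ y) :
    ⌊a * (j:ℝ) + x⌋ = ⌊a * (j:ℝ) + y⌋ := by
  have hc0 : 0 ≤ Int.fract (a * (j:ℝ)) := Int.fract_nonneg _
  have hc1 : Int.fract (a * (j:ℝ)) < 1 := Int.fract_lt_one _
  have key : ∀ z : ℝ, ⌊a * (j:ℝ) + z⌋ = ⌊Int.fract (a * (j:ℝ)) + z⌋ + ⌊a * (j:ℝ)⌋ := by
    intro z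
    conv_lhs => rw [show a * (j:ℝ) + z
      = (Int.fract (a * (j:ℝ)) + z) + (⌊a * (j:ℝ)⌋ : ℝ) by
        have hss := Int.fract_sub_self (a * (j:ℝ)); linarith]
    rw [Int.floor_add_intCast]
  rw [key, key]
  congr 1
  by_cases hcx : 1 - Int.fract (a * (j:ℝ)) ≤ x
  · have hcy := h.mp hcx
    have e1 : ⌊Int.fract (a * (j:ℝ)) + x⌋ = 1 :=
      Int.floor_eq_iff.mpr ⟨by push_cast; linarith, by push_cast; linarith⟩
    have e2 : ⌊Int.fract (a * (j:ℝ)) + y⌋ = 1 :=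
      Int.floor_eq_iff.mpr ⟨by push_cast; linarith, by push_cast; linarith⟩
    rw [e1, e2]
  · have hcy : y < 1 - Int.fract (a * (j:ℝ)) := not_le.mp (fun hy' => hcx (h.mpr hy'))
    push_neg at hcx
    have e1 : ⌊Int.fract (a * (j:ℝ)) + x⌋ = 0 :=
      Int.floor_eq_zero_iff.mpr ⟨by linarith, by linarith⟩
    have e2 : ⌊Int.fract (a * (j:ℝ)) + y⌋ = 0 :=
      Int.floor_eq_zero_iff.mpr ⟨by linarith, by linarith⟩
    rw [e1, e2]

private lemma factor_mono (a : ℝ) (ha : Irrational a) (ρ ρ' : ℝ) (u : List ℤ)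
    (h : IsFactor (sturmianWord a ρ) u) : IsFactor (sturmianWord a ρ') u := by
  obtain ⟨i, hu⟩ := h
  have hx0 : 0 ≤ Int.fract (a * i + ρ) := Int.fract_nonneg _
  have hx1 : Int.fract (a * i + ρ) < 1 := Int.fract_lt_one _
  set L : ℕ := u.length with hL
  set P : Finset ℝ := (Finset.range (L+1)).image (fun j : ℕ => 1 - Int.fract (a * j)) with hP
  set Fb : Finset ℝ := insert 0 (P.filter (· ≤ Int.fract (a * i + ρ))) with hFb
  set Fb' : Finset ℝ := insert 1 (P.filter (fun p => Int.fract (a * i + ρ) < p)) with hFb'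
  set b : ℝ := Fb.max' (Finset.insert_nonempty _ _) with hb
  set b' : ℝ := Fb'.min' (Finset.insert_nonempty _ _) with hb'
  have hb0 : 0 ≤ b := Finset.le_max' _ _ (Finset.mem_insert_self _ _)
  have hbx : b ≤ Int.fract (a * i + ρ) := by
    rcases Finset.mem_insert.mp (Finset.max'_mem Fb (Finset.insert_nonempty _ _)) with h0 | hf
    · rw [hb, h0]; exact hx0
    · exact (Finset.mem_filter.mp hf).2
  have hb'1 : b' ≤ 1 := Finset.min'_le _ _ (Finset.mem_insert_self _ _)
  have hxb' : Int.fract (a * i + ρ) < b' := by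
    rcases Finset.mem_insert.mp (Finset.min'_mem Fb' (Finset.insert_nonempty _ _)) with h0 | hf
    · rw [hb', h0]; exact hx1
    · exact (Finset.mem_filter.mp hf).2
  obtain ⟨n, hn1, hn2⟩ := fract_orbit_dense a ha ρ' hb0 (lt_of_le_of_lt hbx hxb') hb'1
  have hy0 : 0 ≤ Int.fract (a * n + ρ') := Int.fract_nonneg _
  have hy1 : Int.fract (a * n + ρ') < 1 := Int.fract_lt_one _
  have hiff : ∀ j : ℕ, j ≤ L →
      (1 - Int.fract (a * j) ≤ Int.fract (a * i + ρ) ↔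
       1 - Int.fract (a * j) ≤ Int.fract (a * n + ρ')) := by
    intro j hj
    have hpP : (1 - Int.fract (a * (j:ℝ))) ∈ P := by
      rw [hP]
      exact Finset.mem_image.mpr ⟨j, Finset.mem_range.mpr (by omega), rfl⟩
    constructor
    · intro hpx
      have hmem : (1 - Int.fract (a * (j:ℝ))) ∈ Fb :=
        Finset.mem_insert_of_mem (Finset.mem_filter.mpr ⟨hpP, hpx⟩)
      have hle : (1 - Int.fract (a * (j:ℝ))) ≤ b := Finset.le_max' _ _ hmem
      linarith
    · intro hpy
      by_contra hpx
      push_neg at hpx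
      have hmem : (1 - Int.fract (a * (j:ℝ))) ∈ Fb' :=
        Finset.mem_insert_of_mem (Finset.mem_filter.mpr ⟨hpP, hpx⟩)
      have hle : b' ≤ (1 - Int.fract (a * (j:ℝ))) := Finset.min'_le _ _ hmem
      linarith
  have hmain : ∀ j : ℕ, j < L → sturmianWord a ρ (i + j) = sturmianWord a ρ' (n + j) := by
    intro j hj
    rw [sturmian_shift a ρ i j, sturmian_shift a ρ' n j]
    have f1 : ⌊a * (j:ℝ) + Int.fract (a * i + ρ)⌋ = ⌊a * (j:ℝ) + Int.fract (a * n + ρ')⌋ :=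
      floor_eq_floor a hx0 hx1 hy0 hy1 j (hiff j (by omega))
    have f2 : ⌊a * ((j:ℝ)+1) + Int.fract (a * i + ρ)⌋
        = ⌊a * ((j:ℝ)+1) + Int.fract (a * n + ρ')⌋ := by
      have := floor_eq_floor a hx0 hx1 hy0 hy1 (j+1) (hiff (j+1) (by omega))
      push_cast at this
      exact this
    rw [f1, f2]
  refine ⟨n, ?_⟩
  conv_lhs => rw [hu]
  rw [show u.length = L from rfl]
  apply List.map_congr_left
  intro j hj
  exact hmain j (List.mem_range.mp hj)

/-- Two Sturmian words with the same slope have exactly the same factors. -/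
theorem sturmian_same_slope_same_factors (a : ℝ) (ha : Irrational a)
    (ha0 : 0 < a) (ha1 : a < 1) (ρ ρ' : ℝ) :
    ∀ u : List ℤ, IsFactor (sturmianWord a ρ) u ↔ IsFactor (sturmianWord a ρ') u :=
  fun u => ⟨factor_mono a ha ρ ρ' u, factor_mono a ha ρ' ρ u⟩
end

section
/- The factor (010)^3 of the Fibonacci word occurs in the Fibonacci word, but not all of its conjugates are factors of the Fibonacci word; in particular, being a power of a standard word does not imply that all conjugates are factors. -/
/-- `m`-fold concatenation of the word `v`. -/
def listPow {α : Type*} (v : List α) (m : ℕ) : List α :=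
  (List.replicate m v).flatten

/-- Standard words of the directive sequence `d` (shifted index: `stdWord d (k+1)`
is the standard word `s_k`, with `s_{-1} = 1`, `s_0 = 0`,
`s_n = s_{n-1}^{d_n} s_{n-2}`). -/
def stdWord (d : ℕ → ℕ) : ℕ → List ℤ
  | 0 => [1]
  | 1 => [0]
  | n + 2 => listPow (stdWord d (n + 1)) (d (n + 1)) ++ stdWord d n


/-- Iterates of the Fibonacci morphism `0 ↦ 01, 1 ↦ 0` applied to `0`. -/
def fibIter : ℕ → List ℤ
  | 0 => [0]
  | n + 1 => (fibIter n).flatMap fun a => if a = 0 then [0, 1] else [0]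

/-- The Fibonacci word, the fixed point of `0 ↦ 01, 1 ↦ 0` starting with `0`. -/
def fibWord (n : ℕ) : ℤ := (fibIter (n + 1)).getD n 0

lemma fibIter_add_two (n : ℕ) : fibIter (n + 2) = fibIter (n + 1) ++ fibIter n := by
  induction n with
  | zero => decide
  | succ n ih =>
    show (fibIter (n+2)).flatMap _ = (fibIter (n+1)).flatMap _ ++ fibIter (n+1)
    rw [ih, List.flatMap_append]
    rfl

lemma fibIter_length (n : ℕ) : n < (fibIter n).length := by
  induction n using Nat.strong_induction_on with
  | _ n ih =>
    match n with
    | 0 => decide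
    | 1 => decide
    | n + 2 =>
      rw [fibIter_add_two, List.length_append]
      have h1 := ih (n+1) (by omega)
      have h2 := ih n (by omega)
      omega

lemma fibIter_prefix : ∀ {n m : ℕ}, n ≤ m → fibIter n <+: fibIter m := by
  intro n m h
  induction m with
  | zero => rw [Nat.le_zero.mp h]
  | succ m ih =>
    rcases Nat.lt_or_ge n (m+1) with h' | h'
    · refine (ih (by omega)).trans ?_
      match m with
      | 0 => exact ⟨[1], rfl⟩
      | m + 1 => exact ⟨fibIter m, (fibIter_add_two m).symm⟩
    · rw [Nat.le_antisymm h h']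

lemma fibWord_getD {m k : ℕ} (h : k < (fibIter m).length) :
    fibWord k = (fibIter m).getD k 0 := by
  have hk : k < (fibIter (k+1)).length := by have := fibIter_length (k+1); omega
  rw [fibWord, List.getD_eq_getElem _ _ hk, List.getD_eq_getElem _ _ h]
  rcases Nat.le_total m (k+1) with h' | h'
  · exact ((fibIter_prefix h').getElem h).symm
  · exact (fibIter_prefix h').getElem hk

lemma window_eq (l : List ℤ) (i L : ℕ) (h : i + L ≤ l.length) :
    (List.range L).map (fun j => l.getD (i+j) 0) = (l.drop i).take L := by
  apply List.ext_getElem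
  · simp; omega
  · intro j h1 h2
    have hj : i + j < l.length := by simp at h1; omega
    simp [List.getD_eq_getElem _ _ hj, List.getElem?_eq_getElem hj]

lemma crossing {u v B : List ℤ} (hu : 7 ≤ u.length) (hB : B.length = 8)
    (h : B <:+: u ++ v) :
    B <:+: u ∨ B <:+: v ∨ B <:+: (u.drop (u.length - 7) ++ v.take 7) := by
  obtain ⟨s, t, hst⟩ := h
  have hd : B ++ t = (u ++ v).drop s.length := by
    rw [← hst, show s ++ B ++ t = s ++ (B ++ t) by simp, List.drop_left]
  have hBe : B = ((u ++ v).drop s.length).take 8 := by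
    rw [← hd, List.take_left' hB]
  set i := s.length with hidef
  rcases le_or_gt (i+8) u.length with hc | hc
  · left
    rw [List.drop_append_of_le_length (by omega),
        List.take_append_of_le_length (by simp; omega)] at hBe
    exact hBe ▸ ((List.take_prefix _ _).isInfix.trans (List.drop_suffix _ _).isInfix)
  rcases le_or_gt u.length i with hc2 | hc2
  · right; left
    rw [show i = u.length + (i - u.length) by omega, List.drop_length_add_append] at hBe
    exact hBe ▸ ((List.take_prefix _ _).isInfix.trans (List.drop_suffix _ _).isInfix)
  · right; right
    set c := u.length - 7 with hcdef
    have hdc : (u++v).drop c = u.drop c ++ v := List.drop_append_of_le_length (by omega)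
    have hlen7 : (u.drop c).length = 7 := by simp; omega
    set j := i - c with hjdef
    have hBe2 : B = ((u.drop c ++ v).drop j).take 8 := by
      rw [hBe, show i = c + j by omega, ← List.drop_drop, hdc]
    have key : ((u.drop c ++ v).drop j).take 8 = (((u.drop c ++ v).take 14).drop j).take 8 := by
      rw [List.drop_take, List.take_take, Nat.min_eq_left (by omega)]
    have h14 : (u.drop c ++ v).take 14 = u.drop c ++ v.take 7 := by
      rw [show (14:ℕ) = (u.drop c).length + 7 by omega, List.take_length_add_append]
    rw [key, h14] at hBe2
    exact hBe2 ▸ ((List.take_prefix _ _).isInfix.trans (List.drop_suffix _ _).isInfix)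

lemma fibIter_len7 {n : ℕ} (h : 4 ≤ n) : 7 ≤ (fibIter n).length := by
  have := (fibIter_prefix h).length_le
  have h8 : (fibIter 4).length = 8 := by decide
  omega

lemma fib_suffix7 : ∀ n, 4 ≤ n → (fibIter n).drop ((fibIter n).length - 7) =
    if n % 2 = 0 then ([1,0,0,1,0,1,0] : List ℤ) else [1,0,0,1,0,0,1] := by
  intro n
  induction n using Nat.strong_induction_on with
  | _ n ih =>
    match n with
    | 0 | 1 | 2 | 3 => intro h; omega
    | 4 => intro _; decide
    | 5 => intro _; decide
    | (n+6) =>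
      intro _
      have h := ih (n+4) (by omega) (by omega)
      have hlen : 7 ≤ (fibIter (n+4)).length := fibIter_len7 (by omega)
      rw [show n+6 = (n+4)+2 from rfl, fibIter_add_two,
        show (fibIter (n+5) ++ fibIter (n+4)).length - 7 =
          (fibIter (n+5)).length + ((fibIter (n+4)).length - 7) by
            simp [List.length_append]; omega,
        List.drop_length_add_append, h, show (n+4+2) % 2 = (n+4) % 2 by omega]

lemma fib_take7 {n : ℕ} (h : 4 ≤ n) : (fibIter n).take 7 = [0,1,0,0,1,0,1] := by
  obtain ⟨t, ht⟩ := fibIter_prefix h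
  rw [← ht, List.take_append_of_le_length (by decide)]
  decide

lemma noB : ∀ n, ¬ (([0,0,1,0,0,1,0,0] : List ℤ) <:+: fibIter n) := by
  intro n
  induction n using Nat.strong_induction_on with
  | _ n ih =>
    match n with
    | 0 => decide
    | 1 => decide
    | 2 => decide
    | 3 => decide
    | 4 => decide
    | 5 => decide
    | (n+6) =>
      intro h
      rw [show n+6 = (n+4)+2 from rfl, fibIter_add_two] at h
      rcases crossing (B := [0,0,1,0,0,1,0,0]) (fibIter_len7 (by omega)) rfl h with h | h | h
      · exact ih (n+5) (by omega) h
      · exact ih (n+4) (by omega) h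
      · rw [fib_suffix7 (n+5) (by omega), fib_take7 (by omega)] at h
        rcases Nat.mod_two_eq_zero_or_one (n+5) with hp | hp
        · rw [if_pos hp] at h
          exact absurd h (by decide)
        · rw [if_neg (by omega)] at h
          exact absurd h (by decide)

/-- `(010)^3` is a factor of the Fibonacci word and `010` is a standard word, yet not
all conjugates of `(010)^3` are factors of the Fibonacci word: being a power of a
standard word does not imply that all conjugates are factors. -/
theorem fib_power_of_standard_not_all_conjugates :
    [0, 1, 0] = stdWord (fun _ => 1) 3 ∧
    IsFactor fibWord (listPow [0, 1, 0] 3) ∧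
    ¬ ∀ i : ℕ, IsFactor fibWord ((listPow [0, 1, 0] 3).rotate i) := by
  refine ⟨by decide, ?_, ?_⟩
  · refine ⟨5, ?_⟩
    show listPow [0,1,0] 3 = (List.range 9).map fun j => fibWord (5+j)
    have h : (5:ℕ) + 9 ≤ (fibIter 7).length := by decide
    have hm : (List.range 9).map (fun j => fibWord (5+j)) =
        (List.range 9).map (fun j => (fibIter 7).getD (5+j) 0) := by
      apply List.map_congr_left
      intro j hj
      simp only [List.mem_range] at hj
      exact fibWord_getD (by omega)
    rw [hm, window_eq _ _ _ h]
    decide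
  · intro hall
    obtain ⟨i, hi⟩ := hall 2
    have hrot : (listPow [0,1,0] 3 : List ℤ).rotate 2 = [0,0,1,0,0,1,0,0,1] := by decide
    rw [hrot] at hi
    have hlen := fibIter_length (i+9)
    have hw : (List.range 9).map (fun j => fibWord (i+j)) =
        ((fibIter (i+9)).drop i).take 9 := by
      rw [← window_eq _ i 9 (by omega)]
      apply List.map_congr_left
      intro j hj
      simp only [List.mem_range] at hj
      exact fibWord_getD (by omega)
    rw [show ([0,0,1,0,0,1,0,0,1] : List ℤ).length = 9 from rfl, hw] at hi
    apply noB (i+9)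
    have hpre : ([0,0,1,0,0,1,0,0] : List ℤ) <+: [0,0,1,0,0,1,0,0,1] := ⟨[1], rfl⟩
    rw [hi] at hpre
    exact hpre.isInfix.trans
      ((List.take_prefix _ _).isInfix.trans (List.drop_suffix _ _).isInfix)
end

section
/- For the Fibonacci word f, the Lie complexity satisfies: L_f(n) = 1 if n = 0, or n = F_k for some k ≥ 4, or n = 2F_{k−1} for some k ≥ 4; L_f(n) = 2 if n = 1 or n = 2; and L_f(n) = 0 otherwise, where F_1 = F_2 = 1 and F_n = F_{n−1} + F_{n−2}. -/
namespace FibAux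

def σL (l : List ℤ) : List ℤ := l.flatMap fun a => if a = 0 then [0, 1] else [0]

lemma fibIter_succ (n : ℕ) : fibIter (n + 1) = σL (fibIter n) := rfl

@[simp] lemma σL_nil : σL [] = [] := rfl

@[simp] lemma σL_cons (a : ℤ) (l : List ℤ) :
    σL (a :: l) = (if a = 0 then [0, 1] else [0]) ++ σL l := rfl

@[simp] lemma σL_append (l₁ l₂ : List ℤ) : σL (l₁ ++ l₂) = σL l₁ ++ σL l₂ :=
  List.flatMap_append ..

lemma fibIter_add_two (n : ℕ) : fibIter (n + 2) = fibIter (n + 1) ++ fibIter n := by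
  induction n with
  | zero => rfl
  | succ n ih =>
    rw [fibIter_succ (n+2), ih, σL_append, ← fibIter_succ, ← fibIter_succ,
      show n+1+1 = n+2 from rfl, ih, List.append_assoc]

lemma length_fibIter (n : ℕ) : (fibIter n).length = Nat.fib (n + 2) := by
  induction n using Nat.strong_induction_on with
  | _ n ih =>
    match n with
    | 0 => rfl
    | 1 => rfl
    | (n+2) =>
      rw [fibIter_add_two, List.length_append, ih (n+1) (by omega), ih n (by omega)]
      have := Nat.fib_add_two (n := n + 2)
      simp only [show n + 1 + 2 = n + 2 + 1 from by omega] at *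
      omega

lemma fibIter_prefix (n : ℕ) : fibIter n <+: fibIter (n + 1) := by
  match n with
  | 0 => exact ⟨[1], rfl⟩
  | (n+1) => rw [fibIter_add_two]; exact List.prefix_append _ _

lemma fibIter_prefix_le {m n : ℕ} (h : m ≤ n) : fibIter m <+: fibIter n := by
  induction n with
  | zero => rw [Nat.le_zero.mp h]
  | succ n ih =>
    rcases Nat.lt_or_ge m (n+1) with h' | h'
    · exact (ih (by omega)).trans (fibIter_prefix n)
    · rw [show m = n + 1 by omega]

end FibAux

-- window machinery
def W (i L : ℕ) : List ℤ := (List.range L).map fun j => fibWord (i + j)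

@[simp] lemma length_W (i L : ℕ) : (W i L).length = L := by simp [W]

@[simp] lemma W_zero (i : ℕ) : W i 0 = [] := rfl

lemma W_succ (i L : ℕ) : W i (L + 1) = W i L ++ [fibWord (i + L)] := by
  simp [W, List.range_succ]

lemma W_add (i a b : ℕ) : W i (a + b) = W i a ++ W (i + a) b := by
  induction b with
  | zero => simp
  | succ b ih => rw [show a + (b+1) = (a+b)+1 from rfl, W_succ, ih, W_succ,
      List.append_assoc, Nat.add_assoc]

lemma W_one (i : ℕ) : W i 1 = [fibWord i] := by
  rw [show (1:ℕ) = 0 + 1 from rfl, W_succ]; simp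

lemma isFactor_iff_W (u : List ℤ) : IsFactor fibWord u ↔ ∃ i, u = W i u.length :=
  Iff.rfl

lemma isFactor_W (i L : ℕ) : IsFactor fibWord (W i L) := ⟨i, by simp [W]⟩

lemma getElem_W (i L j : ℕ) (h : j < L) : (W i L)[j]'(by simpa using h) = fibWord (i + j) := by
  simp [W]

lemma isFactor_infix {u v : List ℤ} (h : u <:+: v) (hv : IsFactor fibWord v) :
    IsFactor fibWord u := by
  obtain ⟨a, b, rfl⟩ := h
  rw [isFactor_iff_W] at hv ⊢
  obtain ⟨i, hi⟩ := hv
  refine ⟨i + a.length, ?_⟩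
  rw [List.length_append, List.length_append, W_add, W_add] at hi
  have h1 := List.append_inj hi (by simp)
  have h2 := List.append_inj h1.1 (by simp)
  exact h2.2

lemma isFactor_nil : IsFactor fibWord [] := ⟨0, rfl⟩

-- fibWord basics
lemma fib_lower (j : ℕ) : j + 1 ≤ Nat.fib (j + 2) := by
  induction j with
  | zero => simp
  | succ j ih =>
    have h2 := Nat.fib_add_two (n := j + 1)
    have hp := Nat.fib_pos.mpr (show 0 < j + 1 by omega)
    simp only [show j + 1 + 2 = j + 3 from rfl, show j + 1 + 1 = j + 2 from rfl] at h2 ⊢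
    omega

lemma fibWord_eq_getD (m i : ℕ) (h : i < Nat.fib (m + 2)) :
    fibWord i = (fibIter m).getD i 0 := by
  have hfib : i < (fibIter (i+1)).length := by
    rw [FibAux.length_fibIter]
    have := fib_lower (i+1)
    simp only [show i + 1 + 2 = i + 3 from rfl] at this ⊢
    have := fib_lower i
    have h3 := Nat.fib_add_two (n := i + 1)
    simp only [show i + 1 + 2 = i + 3 from rfl, show i + 1 + 1 = i + 2 from rfl] at h3
    omega
  rcases Nat.le_total (i+1) m with hm | hm
  · obtain ⟨t, ht⟩ := FibAux.fibIter_prefix_le hm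
    have h2 : (fibIter (i+1)).getD i 0 = (fibIter m).getD i 0 := by
      rw [← ht, List.getD_append _ _ _ _ hfib]
    rw [fibWord, h2]
  · obtain ⟨t, ht⟩ := FibAux.fibIter_prefix_le hm
    have hl : i < (fibIter m).length := by rw [FibAux.length_fibIter]; omega
    have h2 : (fibIter (i+1)).getD i 0 = (fibIter m).getD i 0 := by
      rw [← ht, List.getD_append _ _ _ _ hl]
    rw [fibWord, h2]

lemma W_zero_eq_take (L m : ℕ) (h : L ≤ Nat.fib (m + 2)) :
    W 0 L = (fibIter m).take L := by
  have hlen : (fibIter m).length = Nat.fib (m + 2) := FibAux.length_fibIter m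
  apply List.ext_getElem
  · simp [hlen]; omega
  · intro j h1 h2
    simp only [W, List.getElem_map, List.getElem_range, List.getElem_take]
    rw [Nat.zero_add, fibWord_eq_getD m j (by simp at h2; omega),
      List.getD_eq_getElem _ _ (by simp at h2 ⊢; omega)]

-- values of fibWord are 0 or 1
lemma mem_fibIter_val {m : ℕ} {a : ℤ} (h : a ∈ fibIter m) : a = 0 ∨ a = 1 := by
  induction m generalizing a with
  | zero => simp only [fibIter] at h; simp at h; exact Or.inl h
  | succ m ih =>
    rw [FibAux.fibIter_succ, FibAux.σL] at h
    simp only [List.mem_flatMap] at h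
    obtain ⟨b, hb, ha⟩ := h
    rcases ih hb with h0 | h1
    · subst h0; simp at ha; tauto
    · subst h1; norm_num at ha; tauto

lemma fibWord_val (i : ℕ) : fibWord i = 0 ∨ fibWord i = 1 := by
  have hfib : i < (fibIter (i+1)).length := by
    rw [FibAux.length_fibIter]
    have := fib_lower (i+1)
    simp only [show i + 1 + 2 = i + 3 from rfl] at this ⊢
    omega
  have : fibWord i = (fibIter (i+1))[i]'hfib := by
    rw [fibWord, List.getD_eq_getElem _ _ hfib]
  rw [this]
  exact mem_fibIter_val (List.getElem_mem _)

-- block start positions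
def blk : ℕ → ℕ
  | 0 => 0
  | q + 1 => blk q + (if fibWord q = 0 then 2 else 1)

lemma blk_eq_len (q : ℕ) : blk q = (FibAux.σL (W 0 q)).length := by
  induction q with
  | zero => simp [blk]
  | succ q ih =>
    rw [W_succ, FibAux.σL_append, List.length_append, blk, ih, Nat.zero_add]
    rcases fibWord_val q with h | h <;> simp [FibAux.σL, h]

lemma blk_core (q : ℕ) :
    fibWord (blk q) = 0 ∧ (fibWord q = 0 → fibWord (blk q + 1) = 1) := by
  set m := q + 1 with hm
  have hq : q < (fibIter m).length := by
    rw [FibAux.length_fibIter]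
    have := fib_lower (q+1)
    simp only [hm, show q + 1 + 2 = q + 3 from rfl] at this ⊢
    omega
  have hsplit : fibIter m = (fibIter m).take q ++ (fibIter m).drop q :=
    (List.take_append_drop _ _).symm
  have hWq : W 0 q = (fibIter m).take q := by
    apply W_zero_eq_take
    rw [← FibAux.length_fibIter]; omega
  have hdrop : (fibIter m).drop q = fibWord q :: (fibIter m).drop (q+1) := by
    rw [List.drop_eq_getElem_cons hq]
    congr 1
    rw [fibWord_eq_getD m q (by rw [← FibAux.length_fibIter]; omega),
      List.getD_eq_getElem _ _ hq]
  have himg : fibIter (m+1) = FibAux.σL (W 0 q) ++ FibAux.σL ((fibIter m).drop q) := by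
    rw [hWq, FibAux.fibIter_succ, ← FibAux.σL_append, ← hsplit]
  have hblen : blk q = (FibAux.σL (W 0 q)).length := blk_eq_len q
  have hfw : ∀ j : ℕ, j < (fibIter (m+1)).length → fibWord j = (fibIter (m+1)).getD j 0 := by
    intro j hj
    apply fibWord_eq_getD
    rw [← FibAux.length_fibIter]; exact hj
  rcases fibWord_val q with h0 | h1
  · have hdrop2 : FibAux.σL ((fibIter m).drop q) = 0 :: 1 :: FibAux.σL ((fibIter m).drop (q+1)) := by
      rw [hdrop, h0]; rfl
    have hlen2 : (fibIter (m+1)).length = blk q + (FibAux.σL ((fibIter m).drop q)).length := by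
      rw [himg, List.length_append, hblen]
    have hge2 : 2 ≤ (FibAux.σL ((fibIter m).drop q)).length := by rw [hdrop2]; simp
    constructor
    · rw [hfw _ (by omega), himg, List.getD_append_right _ _ _ _ (by omega)]
      rw [← hblen, Nat.sub_self, hdrop2]
      rfl
    · intro _
      rw [hfw _ (by omega), himg, List.getD_append_right _ _ _ _ (by omega)]
      rw [← hblen, show blk q + 1 - blk q = 1 by omega, hdrop2]
      rfl
  · have hdrop2 : FibAux.σL ((fibIter m).drop q) = 0 :: FibAux.σL ((fibIter m).drop (q+1)) := by
      rw [hdrop, h1]; norm_num [FibAux.σL]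
    have hlen2 : (fibIter (m+1)).length = blk q + (FibAux.σL ((fibIter m).drop q)).length := by
      rw [himg, List.length_append, hblen]
    have hge1 : 1 ≤ (FibAux.σL ((fibIter m).drop q)).length := by rw [hdrop2]; simp
    constructor
    · rw [hfw _ (by omega), himg, List.getD_append_right _ _ _ _ (by omega)]
      rw [← hblen, Nat.sub_self, hdrop2]; rfl
    · intro h0; rw [h0] at h1; norm_num at h1

lemma blk_zero : blk 0 = 0 := rfl

lemma blk_succ_of_zero {q : ℕ} (h : fibWord q = 0) : blk (q+1) = blk q + 2 := by
  simp [blk, h]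

lemma blk_succ_of_one {q : ℕ} (h : fibWord q = 1) : blk (q+1) = blk q + 1 := by
  simp [blk, h]

lemma blk_lt_succ (q : ℕ) : blk q < blk (q + 1) := by
  rcases fibWord_val q with h | h
  · rw [blk_succ_of_zero h]; omega
  · rw [blk_succ_of_one h]; omega

lemma blk_mono : StrictMono blk := strictMono_nat_of_lt_succ blk_lt_succ

lemma blk_cover (p : ℕ) : ∃ q, blk q ≤ p ∧ p < blk (q + 1) := by
  induction p with
  | zero => exact ⟨0, by simp [blk_zero], blk_lt_succ 0⟩
  | succ p ih =>
    obtain ⟨q, h1, h2⟩ := ih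
    rcases Nat.lt_or_ge (p+1) (blk (q+1)) with h | h
    · exact ⟨q, by omega, h⟩
    · exact ⟨q+1, by omega, by have := blk_lt_succ (q+1); omega⟩

lemma fibWord_zero_iff (p : ℕ) : fibWord p = 0 ↔ ∃ q, p = blk q := by
  constructor
  · intro h0
    obtain ⟨q, h1, h2⟩ := blk_cover p
    rcases fibWord_val q with hq | hq
    · rw [blk_succ_of_zero hq] at h2
      rcases (by omega : p = blk q ∨ p = blk q + 1) with h | h
      · exact ⟨q, h⟩
      · exfalso
        have := (blk_core q).2 hq
        rw [← h, h0] at this; norm_num at this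
    · rw [blk_succ_of_one hq] at h2
      exact ⟨q, by omega⟩
  · rintro ⟨q, rfl⟩
    exact (blk_core q).1

lemma fibWord_no_11 {p : ℕ} (h : fibWord p = 1) : fibWord (p + 1) = 0 := by
  obtain ⟨q, h1, h2⟩ := blk_cover p
  have hne : ¬ ∃ q', p = blk q' := by
    intro ⟨q', hq'⟩
    rw [hq', (blk_core q').1] at h; norm_num at h
  have hq0 : fibWord q = 0 := by
    rcases fibWord_val q with h' | h'
    · exact h'
    · rw [blk_succ_of_one h'] at h2
      exact absurd ⟨q, by omega⟩ hne
  rw [blk_succ_of_zero hq0] at h2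
  have hp : p = blk q + 1 := by
    rcases (by omega : p = blk q ∨ p = blk q + 1) with h' | h'
    · exact absurd ⟨q, h'⟩ hne
    · exact h'
  have : p + 1 = blk (q + 1) := by rw [blk_succ_of_zero hq0]; omega
  rw [this]; exact (blk_core (q+1)).1

lemma fibWord_no_000 {p : ℕ} (h0 : fibWord p = 0) (h1 : fibWord (p + 1) = 0) :
    fibWord (p + 2) = 1 := by
  obtain ⟨q, hq⟩ := (fibWord_zero_iff p).mp h0
  obtain ⟨q', hq'⟩ := (fibWord_zero_iff (p+1)).mp h1
  have hlt : blk q < blk q' := by omega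
  have hqq : q < q' := blk_mono.lt_iff_lt.mp hlt
  have hq1 : q' = q + 1 := by
    by_contra hne
    have : q + 1 < q' := by omega
    have := blk_mono this
    have := blk_lt_succ q
    omega
  subst hq1
  -- block q has width 1, so fibWord q = 1
  have hw : fibWord q = 1 := by
    rcases fibWord_val q with h' | h'
    · rw [blk_succ_of_zero h'] at hq'; omega
    · exact h'
  have hq10 : fibWord (q+1) = 0 := fibWord_no_11 hw
  have := (blk_core (q+1)).2 hq10
  have hb2 : blk (q+2) = blk (q+1) + 2 := blk_succ_of_zero hq10
  have : fibWord (blk (q+1) + 1) = 1 := this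
  rw [show p + 2 = blk (q+1) + 1 by omega]
  exact this

lemma not_factor_11 : ¬ IsFactor fibWord [1, 1] := by
  rintro ⟨i, hi⟩
  simp only [List.length_cons, List.length_nil] at hi
  have h1 : fibWord i = 1 := by
    have := congrArg (fun l => l.getD 0 (0:ℤ)) hi
    simpa [List.range_succ] using this.symm
  have h2 : fibWord (i+1) = 1 := by
    have := congrArg (fun l => l.getD 1 (0:ℤ)) hi
    simpa [List.range_succ] using this.symm
  have := fibWord_no_11 h1
  rw [h2] at this; norm_num at this

lemma not_factor_000 : ¬ IsFactor fibWord [0, 0, 0] := by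
  rintro ⟨i, hi⟩
  simp only [List.length_cons, List.length_nil] at hi
  have h1 : fibWord i = 0 := by
    have := congrArg (fun l => l.getD 0 (0:ℤ)) hi
    simpa [List.range_succ] using this.symm
  have h2 : fibWord (i+1) = 0 := by
    have := congrArg (fun l => l.getD 1 (0:ℤ)) hi
    simpa [List.range_succ] using this.symm
  have h3 : fibWord (i+2) = 0 := by
    have := congrArg (fun l => l.getD 2 (0:ℤ)) hi
    simpa [List.range_succ] using this.symm
  have := fibWord_no_000 h1 h2
  rw [h3] at this; norm_num at this

-- left extension by 0 of a factor starting with 1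
lemma isFactor_zero_cons {y : List ℤ} (h : IsFactor fibWord (1 :: y)) :
    IsFactor fibWord (0 :: 1 :: y) := by
  rw [isFactor_iff_W] at h
  obtain ⟨i, hi⟩ := h
  have hlen : (1 :: y).length = 1 + y.length := by simp; omega
  have h1 : fibWord i = 1 := by
    rw [hlen, W_add, W_one] at hi
    have := congrArg (fun l => l.getD 0 (0:ℤ)) hi
    simpa using this.symm
  have hi0 : i ≠ 0 := by
    intro h'
    rw [h'] at h1
    have : fibWord 0 = 0 := (blk_core 0).1
    rw [h1] at this; norm_num at this
  obtain ⟨i', rfl⟩ : ∃ i', i = i' + 1 := ⟨i - 1, by omega⟩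
  have h0 : fibWord i' = 0 := by
    rcases fibWord_val i' with h' | h'
    · exact h'
    · rw [fibWord_no_11 h'] at h1; norm_num at h1
  refine ⟨i', ?_⟩
  have : (0 : ℤ) :: 1 :: y = W i' ((0 :: 1 :: y).length) := by
    have hl : (0 :: 1 :: y).length = 1 + (1 :: y).length := by simp; omega
    rw [hl, W_add, W_one, h0]
    rw [show i' + 1 = i' + 1 from rfl, ← hi]
    rfl
  exact this

-- forward: σL image of a window is a window
lemma sigma_W (q r : ℕ) : FibAux.σL (W q r) = W (blk q) (blk (q + r) - blk q) := by
  induction r with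
  | zero => simp
  | succ r ih =>
    rw [W_succ, FibAux.σL_append, ih]
    have hmono : blk q ≤ blk (q + r) := blk_mono.le_iff_le.mpr (by omega)
    rcases fibWord_val (q + r) with h | h
    · have hb : blk (q + r + 1) = blk (q + r) + 2 := blk_succ_of_zero h
      have h1 : fibWord (blk (q + r)) = 0 := (blk_core (q+r)).1
      have h2 : fibWord (blk (q + r) + 1) = 1 := (blk_core (q+r)).2 h
      rw [show q + (r + 1) = q + r + 1 from rfl, hb, h]
      rw [show blk (q+r) + 2 - blk q = (blk (q+r) - blk q) + 2 by omega]
      rw [show (blk (q+r) - blk q) + 2 = (blk (q+r) - blk q) + 1 + 1 from rfl]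
      rw [W_succ, W_succ]
      rw [show blk q + (blk (q + r) - blk q) = blk (q+r) by omega]
      rw [show blk q + (blk (q + r) - blk q + 1) = blk (q+r) + 1 by omega]
      rw [h1, h2]
      simp
    · have hb : blk (q + r + 1) = blk (q + r) + 1 := blk_succ_of_one h
      have h1 : fibWord (blk (q + r)) = 0 := (blk_core (q+r)).1
      rw [show q + (r + 1) = q + r + 1 from rfl, hb, h]
      rw [show blk (q+r) + 1 - blk q = (blk (q+r) - blk q) + 1 by omega]
      rw [W_succ]
      rw [show blk q + (blk (q + r) - blk q) = blk (q+r) by omega]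
      rw [h1]
      norm_num [FibAux.σL]

lemma W_cons (i L : ℕ) : W i (L + 1) = fibWord i :: W (i + 1) L := by
  rw [show L + 1 = 1 + L by omega, W_add, W_one]; rfl

lemma W_head {i L : ℕ} {y : List ℤ} {x : ℤ} (h : x :: y = W i L) :
    fibWord i = x ∧ y = W (i + 1) y.length := by
  have hL : L = y.length + 1 := by
    have := congrArg List.length h
    simpa using this.symm
  subst hL
  rw [show y.length + 1 = 1 + y.length by omega, W_add, W_one] at h
  simp only [List.cons_append, List.nil_append, List.cons_eq_cons] at h
  exact ⟨h.1.symm, h.2⟩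

lemma isFactor_sigma_zero {v : List ℤ} (h : IsFactor fibWord v) :
    IsFactor fibWord (FibAux.σL v ++ [0]) := by
  rw [isFactor_iff_W] at h
  obtain ⟨q, hq⟩ := h
  have himg : FibAux.σL v = W (blk q) (blk (q + v.length) - blk q) := by
    rw [← sigma_W q v.length]
    exact congrArg FibAux.σL hq
  have h0 : fibWord (blk (q + v.length)) = 0 := (blk_core _).1
  refine (isFactor_iff_W _).mpr ⟨blk q, ?_⟩
  have hmono : blk q ≤ blk (q + v.length) := blk_mono.le_iff_le.mpr (by omega)
  have hlen : (FibAux.σL v ++ [0]).length = (blk (q + v.length) - blk q) + 1 := by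
    rw [List.length_append, himg]; simp
  rw [hlen, W_succ, himg,
    show blk q + (blk (q + v.length) - blk q) = blk (q + v.length) by omega, h0]

lemma isFactor_sigma {v : List ℤ} (h : IsFactor fibWord v) :
    IsFactor fibWord (FibAux.σL v) :=
  isFactor_infix ⟨[], [0], by simp⟩ (isFactor_sigma_zero h)

lemma getLast?_cons_ne {a : ℤ} {l : List ℤ} (h : l ≠ []) :
    (a :: l).getLast? = l.getLast? := by
  cases l with
  | nil => exact absurd rfl h
  | cons b t => exact List.getLast?_cons_cons ..

lemma sigma_head {w : List ℤ} (hval : ∀ x ∈ w, x = 0 ∨ x = 1) (hne : w ≠ []) :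
    ∃ y, FibAux.σL w = 0 :: y := by
  obtain ⟨c, t, rfl⟩ := List.exists_cons_of_ne_nil hne
  rcases hval c (by simp) with hc | hc <;> subst hc
  · exact ⟨1 :: FibAux.σL t, rfl⟩
  · exact ⟨FibAux.σL t, by norm_num [FibAux.σL]⟩

-- backward (recognizability)
lemma backward : ∀ w : List ℤ, (∀ x ∈ w, x = 0 ∨ x = 1) → ∀ q,
    FibAux.σL w = W (blk q) (FibAux.σL w).length →
    (fibWord (blk q + (FibAux.σL w).length) = 0 ∨ w.getLast? = some 0) →
    w = W q w.length := by
  intro w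
  induction w with
  | nil => intro _ _ _ _; simp
  | cons a t ih =>
    intro hval q hocc htr
    rcases hval a (by simp) with ha | ha
    · -- a = 0 : σL w = 0 :: 1 :: σL t
      subst ha
      have hσ : FibAux.σL ((0:ℤ) :: t) = 0 :: 1 :: FibAux.σL t := rfl
      have hlen : (FibAux.σL ((0:ℤ) :: t)).length = (FibAux.σL t).length + 1 + 1 := by
        rw [hσ]; simp
      rw [hlen, hσ, W_cons, W_cons] at hocc
      simp only [List.cons_eq_cons] at hocc
      obtain ⟨hb0, hb1, hbocct⟩ := hocc
      have hq0 : fibWord q = 0 := by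
        rcases fibWord_val q with h' | h'
        · exact h'
        · exfalso
          have he : blk q + 1 = blk (q+1) := by rw [blk_succ_of_one h']
          have h2 : fibWord (blk q + 1) = 0 := by rw [he]; exact (blk_core (q+1)).1
          rw [← hb1] at h2; norm_num at h2
      have hblk : blk (q+1) = blk q + 2 := blk_succ_of_zero hq0
      have ht : t = W (q+1) t.length := by
        apply ih (fun x hx => hval x (by simp [hx])) (q+1)
        · rw [hblk, show blk q + 2 = blk q + 1 + 1 by omega]; exact hbocct
        · rcases htr with h' | h'
          · left
            rw [hblk, show blk q + 2 + (FibAux.σL t).length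
                = blk q + ((FibAux.σL t).length + 1 + 1) by omega]
            exact hlen ▸ h'
          · rcases eq_or_ne t [] with rfl | htne
            · left; simpa using (blk_core (q+1)).1
            · right; rwa [getLast?_cons_ne htne] at h'
      rw [show ((0:ℤ) :: t).length = t.length + 1 by simp, W_cons, hq0, ← ht]
    · -- a = 1 : σL w = 0 :: σL t
      subst ha
      have hσ : FibAux.σL ((1:ℤ) :: t) = 0 :: FibAux.σL t := by norm_num [FibAux.σL]
      have hlen : (FibAux.σL ((1:ℤ) :: t)).length = (FibAux.σL t).length + 1 := by
        rw [hσ]; simp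
      rw [hlen, hσ, W_cons] at hocc
      simp only [List.cons_eq_cons] at hocc
      obtain ⟨hb0, hbocct⟩ := hocc
      have hq1 : fibWord q = 1 := by
        rcases fibWord_val q with h' | h'
        · exfalso
          have h1' : fibWord (blk q + 1) = 1 := (blk_core q).2 h'
          rcases eq_or_ne t [] with rfl | htne
          · rcases htr with h'' | h''
            · rw [hlen] at h''
              have : (FibAux.σL ([] : List ℤ)).length = 0 := rfl
              rw [this] at h''
              rw [show blk q + (0 + 1) = blk q + 1 by omega] at h''
              rw [h1'] at h''; norm_num at h''
            · simp at h''
          · obtain ⟨y, hy⟩ := sigma_head (fun x hx => hval x (by simp [hx])) htne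
            rw [hy] at hbocct
            have := (W_head hbocct).1
            rw [h1'] at this; norm_num at this
        · exact h'
      have hblk : blk (q+1) = blk q + 1 := blk_succ_of_one hq1
      have ht : t = W (q+1) t.length := by
        apply ih (fun x hx => hval x (by simp [hx])) (q+1)
        · rw [hblk]; exact hbocct
        · rcases htr with h' | h'
          · left
            rw [hblk, show blk q + 1 + (FibAux.σL t).length
                = blk q + ((FibAux.σL t).length + 1) by omega]
            exact hlen ▸ h'
          · rcases eq_or_ne t [] with rfl | htne
            · left; simpa using (blk_core (q+1)).1
            · right; rwa [getLast?_cons_ne htne] at h'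
      rw [show ((1:ℤ) :: t).length = t.length + 1 by simp, W_cons, hq1, ← ht]

lemma head_blockstart {x : List ℤ} {i L : ℕ} (hocc : x = W i L) {y : List ℤ}
    (hx : x = 0 :: y) : ∃ q, i = blk q := by
  apply (fibWord_zero_iff i).mp
  rw [hx] at hocc
  exact (W_head hocc).1

lemma isFactor_of_sigma_zero {w : List ℤ} (hval : ∀ x ∈ w, x = 0 ∨ x = 1)
    (h : IsFactor fibWord (FibAux.σL w ++ [0])) : IsFactor fibWord w := by
  rcases eq_or_ne w [] with rfl | hwne
  · exact isFactor_nil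
  rw [isFactor_iff_W] at h
  obtain ⟨i, hi⟩ := h
  have hL : (FibAux.σL w ++ [0]).length = (FibAux.σL w).length + 1 := by simp
  rw [hL, W_succ] at hi
  have hpair := List.append_inj hi (by simp)
  have hocc : FibAux.σL w = W i (FibAux.σL w).length := hpair.1
  have htr : fibWord (i + (FibAux.σL w).length) = 0 := by
    have := hpair.2
    simp only [List.cons_eq_cons] at this
    exact this.1.symm
  obtain ⟨y, hy⟩ := sigma_head hval hwne
  obtain ⟨q, rfl⟩ := head_blockstart hocc hy
  exact ⟨q, backward w hval q hocc (Or.inl htr)⟩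

lemma isFactor_of_sigma_last {w : List ℤ} (hval : ∀ x ∈ w, x = 0 ∨ x = 1)
    (hlast : w.getLast? = some 0) (h : IsFactor fibWord (FibAux.σL w)) :
    IsFactor fibWord w := by
  have hwne : w ≠ [] := by rintro rfl; simp at hlast
  rw [isFactor_iff_W] at h
  obtain ⟨i, hocc⟩ := h
  obtain ⟨y, hy⟩ := sigma_head hval hwne
  obtain ⟨q, rfl⟩ := head_blockstart hocc hy
  exact ⟨q, backward w hval q hocc (Or.inr hlast)⟩

-- rotation helpers
lemma rotate_append_length (x y : List ℤ) : (x ++ y).rotate x.length = y ++ x := by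
  rw [List.rotate_eq_drop_append_take (by simp), List.drop_left, List.take_left]

lemma rotate_eq_of_mod {l : List ℤ} {i j : ℕ} (h : i % l.length = j % l.length) :
    l.rotate i = l.rotate j := by
  rw [← List.rotate_mod l i, ← List.rotate_mod l j, h]

lemma σL_ne_nil {v : List ℤ} (h : v ≠ []) : FibAux.σL v ≠ [] := by
  obtain ⟨c, t, rfl⟩ := List.exists_cons_of_ne_nil h
  rw [FibAux.σL_cons]
  split <;> simp

-- conjClass basics (conjClass defined in main file; restate here)
lemma mem_conjClass_self (l : List ℤ) : l ∈ conjClass l := ⟨0, (List.rotate_zero l).symm⟩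

lemma rotate_mem_conjClass (l : List ℤ) (i : ℕ) : l.rotate i ∈ conjClass l := ⟨i, rfl⟩

lemma conjClass_rotate (l : List ℤ) (i : ℕ) : conjClass (l.rotate i) = conjClass l := by
  rcases eq_or_ne l [] with rfl | hne
  · simp [List.rotate_nil]
  have hpos : 0 < l.length := List.length_pos_iff.mpr hne
  ext w
  constructor
  · rintro ⟨j, rfl⟩
    exact ⟨i + j, by rw [List.rotate_rotate]⟩
  · rintro ⟨j, rfl⟩
    refine ⟨j + (l.length - i % l.length), ?_⟩
    rw [List.rotate_rotate]
    apply rotate_eq_of_mod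
    have := Nat.mod_lt i hpos
    conv_rhs => rw [show i + (j + (l.length - i % l.length))
      = (i % l.length + (l.length - i % l.length)) + j + (i - i % l.length) by
        have := Nat.mod_le i l.length; omega]
    rw [show i % l.length + (l.length - i % l.length) = l.length by omega]
    have hc : i - i % l.length = l.length * (i / l.length) := by
      have := Nat.div_add_mod i l.length; omega
    rw [hc, show l.length + j + l.length * (i / l.length)
      = j + l.length * (i / l.length + 1) by ring, Nat.add_mul_mod_self_left]

lemma conjClass_eq_of_mem {w l : List ℤ} (h : w ∈ conjClass l) :
    conjClass w = conjClass l := by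
  obtain ⟨i, rfl⟩ := h
  exact conjClass_rotate l i

-- σL and rotation
lemma sigma_rotate (v : List ℤ) (j : ℕ) (hj : j ≤ v.length) :
    FibAux.σL (v.rotate j) = (FibAux.σL v).rotate ((FibAux.σL (v.take j)).length) := by
  rw [List.rotate_eq_drop_append_take hj, FibAux.σL_append]
  conv_rhs => rw [show FibAux.σL v = FibAux.σL (v.take j) ++ FibAux.σL (v.drop j) by
    rw [← FibAux.σL_append, List.take_append_drop]]
  rw [rotate_append_length]

lemma sigma_rotate' (v : List ℤ) (j : ℕ) :
    ∃ t, FibAux.σL (v.rotate j) = (FibAux.σL v).rotate t := by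
  rcases eq_or_ne v [] with rfl | hne
  · exact ⟨0, by simp [List.rotate_nil]⟩
  have hpos : 0 < v.length := List.length_pos_iff.mpr hne
  refine ⟨(FibAux.σL (v.take (j % v.length))).length, ?_⟩
  rw [← List.rotate_mod v j]
  exact sigma_rotate v (j % v.length) (le_of_lt (Nat.mod_lt _ hpos))

-- ascent decomposition
lemma ascent_aux : ∀ i : ℕ, ∀ v : List ℤ, v ≠ [] → i < (FibAux.σL v).length →
    ∃ s, ((FibAux.σL v).rotate i = FibAux.σL (v.rotate s)) ∨
      (∃ t3, v.rotate s = 0 :: t3 ∧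
        (FibAux.σL v).rotate i = 1 :: (FibAux.σL t3 ++ [0])) := by
  intro i
  induction i using Nat.strong_induction_on with
  | _ i ih =>
    intro v hne hlt
    obtain ⟨a, t0, rfl⟩ := List.exists_cons_of_ne_nil hne
    rcases Nat.eq_zero_or_pos i with rfl | hipos
    · exact ⟨0, Or.inl (by rw [List.rotate_zero, List.rotate_zero])⟩
    set bs : ℕ := if a = 0 then 2 else 1 with hbs
    rcases Nat.lt_or_ge i bs with hsmall | hbig
    · -- i = 1 and a = 0
      have ha : a = 0 := by
        by_contra h'
        rw [hbs] at hsmall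
        simp only [h', if_false] at hsmall
        omega
      have hi1 : i = 1 := by rw [hbs, ha] at hsmall; simp at hsmall; omega
      subst ha; subst hi1
      refine ⟨0, Or.inr ⟨t0, by rw [List.rotate_zero], ?_⟩⟩
      have : FibAux.σL ((0:ℤ) :: t0) = 0 :: (1 :: FibAux.σL t0) := rfl
      rw [this, List.rotate_cons_succ, List.rotate_zero, List.cons_append]
    · -- i ≥ bs : recurse
      have hkey : (FibAux.σL (a :: t0)).rotate bs = FibAux.σL ((a :: t0).rotate 1) := by
        rw [List.rotate_cons_succ, List.rotate_zero, FibAux.σL_append, FibAux.σL_cons]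
        have : bs = ((if a = 0 then [0,1] else [(0:ℤ)]) : List ℤ).length := by
          rw [hbs]; split <;> rfl
        rw [this, rotate_append_length]
        simp
      have hlen2 : (FibAux.σL ((a :: t0).rotate 1)).length = (FibAux.σL (a :: t0)).length := by
        rw [← hkey, List.length_rotate]
      have hrot : (FibAux.σL (a :: t0)).rotate i
          = (FibAux.σL ((a :: t0).rotate 1)).rotate (i - bs) := by
        rw [← hkey, List.rotate_rotate, show bs + (i - bs) = i by omega]
      have hbs1 : 1 ≤ bs := by rw [hbs]; split <;> omega
      obtain ⟨s', hs'⟩ := ih (i - bs) (by omega) ((a :: t0).rotate 1)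
        (by rw [← List.length_pos_iff, List.length_rotate]; simp)
        (by rw [hlen2]; omega)
      rw [List.rotate_rotate] at hs'
      exact ⟨1 + s', by rw [hrot]; exact hs'⟩

lemma ascent {v : List ℤ} (hne : v ≠ []) (h : ∀ i, IsFactor fibWord (v.rotate i)) :
    ∀ i, IsFactor fibWord ((FibAux.σL v).rotate i) := by
  intro i
  have hpos : 0 < (FibAux.σL v).length := List.length_pos_iff.mpr (σL_ne_nil hne)
  rw [← List.rotate_mod]
  obtain ⟨s, hs | ⟨t3, ht3, hs⟩⟩ := ascent_aux (i % (FibAux.σL v).length) v hne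
    (Nat.mod_lt _ hpos)
  · rw [hs]; exact isFactor_sigma (h s)
  · rw [hs]
    have h1 : IsFactor fibWord (FibAux.σL (v.rotate s) ++ [0]) := isFactor_sigma_zero (h s)
    rw [ht3] at h1
    have : FibAux.σL ((0:ℤ) :: t3) ++ [0] = 0 :: (1 :: (FibAux.σL t3 ++ [0])) := rfl
    rw [this] at h1
    exact isFactor_infix ⟨[0], [], by simp⟩ h1

-- parsing a factor into blocks
def parse : List ℤ → List ℤ
  | [] => []
  | [_] => [1]
  | _ :: b :: t => if b = 1 then 0 :: parse t else 1 :: parse (b :: t)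

lemma parse_val : ∀ l : List ℤ, ∀ x ∈ parse l, x = 0 ∨ x = 1 := by
  intro l
  induction l using parse.induct with
  | case1 => intro x hx; simp [parse] at hx
  | case2 a => intro x hx; simp [parse] at hx; tauto
  | case3 a t ih =>
    intro x hx
    rw [parse, if_pos rfl] at hx
    rcases List.mem_cons.mp hx with rfl | hx
    · tauto
    · exact ih x hx
  | case4 a b t hb ih =>
    intro x hx
    rw [parse, if_neg hb] at hx
    rcases List.mem_cons.mp hx with rfl | hx
    · tauto
    · exact ih x hx

lemma parse_correct : ∀ x : List ℤ, (∃ i, x = W i x.length) →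
    (x = [] ∨ x.head? = some 0) → FibAux.σL (parse x) = x := by
  intro x
  induction x using parse.induct with
  | case1 => intro _ _; rfl
  | case2 a =>
    rintro _ (h | h)
    · simp at h
    · simp only [List.head?_cons, Option.some_inj] at h
      subst h; rfl
  | case3 a t ih =>
    rintro ⟨i, hocc⟩ (h | h)
    · simp at h
    · simp only [List.head?_cons, Option.some_inj] at h
      subst h
      rw [show (0 :: 1 :: t : List ℤ).length = t.length + 1 + 1 by simp, W_cons, W_cons] at hocc
      simp only [List.cons_eq_cons] at hocc
      obtain ⟨h0, h1, ht⟩ := hocc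
      rw [parse, if_pos rfl, FibAux.σL_cons, if_pos rfl]
      have hrec : FibAux.σL (parse t) = t := by
        apply ih ⟨i + 1 + 1, ?_⟩
        · rcases eq_or_ne t [] with rfl | htne
          · left; rfl
          · right
            obtain ⟨c, t', rfl⟩ := List.exists_cons_of_ne_nil htne
            have hc := (W_head ht).1
            have : fibWord (i + 1 + 1) = 0 := by
              have := fibWord_no_11 h1.symm
              rw [show i + 1 + 1 = i + 1 + 1 from rfl] at *
              exact this
            rw [← hc, this]; rfl
        · exact ht
      rw [hrec]; rfl
  | case4 a b t hb ih =>
    rintro ⟨i, hocc⟩ (h | h)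
    · simp at h
    · simp only [List.head?_cons, Option.some_inj] at h
      subst h
      rw [show ((0:ℤ) :: b :: t).length = (b :: t).length + 1 by simp, W_cons] at hocc
      simp only [List.cons_eq_cons] at hocc
      obtain ⟨h0, ht⟩ := hocc
      have hbval : b = 0 := by
        rcases fibWord_val (i + 1) with h' | h'
        · rw [← (W_head ht).1]; exact h'
        · exact absurd ((W_head ht).1.symm.trans h') hb
      rw [parse, if_neg hb, FibAux.σL_cons, if_neg (by norm_num)]
      have hrec : FibAux.σL (parse (b :: t)) = b :: t := by
        apply ih ⟨i + 1, ht⟩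
        right; rw [hbval]; rfl
      rw [hrec]; rfl

lemma isFactor_val {u : List ℤ} (h : IsFactor fibWord u) : ∀ x ∈ u, x = 0 ∨ x = 1 := by
  rw [isFactor_iff_W] at h
  obtain ⟨i, hi⟩ := h
  intro x hx
  rw [hi, W] at hx
  simp only [List.mem_map] at hx
  obtain ⟨j, _, rfl⟩ := hx
  exact fibWord_val _

lemma σL_len_le (w : List ℤ) : (FibAux.σL w).length ≤ 2 * w.length := by
  induction w with
  | nil => simp
  | cons a t ih => rw [FibAux.σL_cons, List.length_append]; split <;> simp <;> omega

lemma σL_len_lt {w : List ℤ} (h : ∃ x ∈ w, x = 0) : w.length < (FibAux.σL w).length := by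
  induction w with
  | nil => simp at h
  | cons a t ih =>
    rw [FibAux.σL_cons, List.length_append]
    obtain ⟨x, hx, rfl⟩ := h
    rcases List.mem_cons.mp hx with rfl | hx
    · have : (FibAux.σL t).length ≥ t.length := by
        clear hx ih
        induction t with
        | nil => simp
        | cons b s ihs => rw [FibAux.σL_cons, List.length_append]; split <;> simp <;> omega
      simp; omega
    · have := ih ⟨0, hx, rfl⟩
      split <;> simp <;> omega

lemma σL_all_ones {w : List ℤ} (h : ∀ x ∈ w, x = 1) :
    FibAux.σL w = List.replicate w.length 0 := by
  induction w with
  | nil => rfl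
  | cons a t ih =>
    rw [FibAux.σL_cons, if_neg (by rw [h a (by simp)]; norm_num),
      ih (fun x hx => h x (by simp [hx]))]
    simp [List.replicate_succ]

lemma rotate_one_cons (a : ℤ) (l : List ℤ) : (a :: l).rotate 1 = l ++ [a] := by
  rw [List.rotate_eq_drop_append_take (by simp)]
  rfl

-- the descent lemma
lemma descent {u : List ℤ} (h3 : 3 ≤ u.length)
    (hA : ∀ i, IsFactor fibWord (u.rotate i)) :
    ∃ v : List ℤ, 2 ≤ v.length ∧ v.length < u.length ∧
      (∀ i, IsFactor fibWord (v.rotate i)) ∧ conjClass u = conjClass (FibAux.σL v) := by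
  have huval : ∀ x ∈ u, x = 0 ∨ x = 1 := by
    have := hA 0
    rw [List.rotate_zero] at this
    exact isFactor_val this
  have hzero : ∃ x ∈ u, x = 0 := by
    by_contra hall
    push_neg at hall
    have hall1 : ∀ x ∈ u, x = 1 := by
      intro x hx
      rcases huval x hx with h | h
      · exact absurd h (hall x hx)
      · exact h
    match u, h3, hall1 with
    | a :: b :: r, h3, hall1 =>
      have ha : a = 1 := hall1 a (by simp)
      have hb : b = 1 := hall1 b (by simp)
      subst ha; subst hb
      have : IsFactor fibWord [1, 1] := by
        apply isFactor_infix (show [(1:ℤ),1] <:+: 1 :: 1 :: r from ⟨[], r, by simp⟩)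
        have := hA 0
        rwa [List.rotate_zero] at this
      exact not_factor_11 this
  obtain ⟨x0, hx0mem, hx0⟩ := hzero
  obtain ⟨j0, hj0lt, hj0⟩ := List.getElem_of_mem hx0mem
  set x := u.rotate j0 with hxdef
  have hxfact : IsFactor fibWord x := hA j0
  have hxrot : ∀ k, IsFactor fibWord (x.rotate k) := by
    intro k
    rw [hxdef, List.rotate_rotate]
    exact hA _
  have hxlen : x.length = u.length := List.length_rotate ..
  have hxhead : x.head? = some 0 := by
    rw [hxdef, List.head?_rotate hj0lt, List.getElem?_eq_getElem hj0lt, hj0, hx0]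
  set v := parse x with hvdef
  have hvval : ∀ y ∈ v, y = 0 ∨ y = 1 := parse_val x
  have hσv : FibAux.σL v = x :=
    parse_correct x ((isFactor_iff_W x).mp hxfact) (Or.inr hxhead)
  have hn : (FibAux.σL v).length = u.length := by rw [hσv, hxlen]
  have hm2 : 2 ≤ v.length := by
    have := σL_len_le v
    omega
  have hmlt : v.length < u.length := by
    rcases Classical.em (∃ y ∈ v, y = 0) with h | h
    · have := σL_len_lt h
      omega
    · exfalso
      push_neg at h
      have hall1 : ∀ y ∈ v, y = 1 := by
        intro y hy
        rcases hvval y hy with h' | h'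
        · exact absurd h' (h y hy)
        · exact h'
      have hrep : x = List.replicate v.length 0 := by rw [← hσv, σL_all_ones hall1]
      have hlen3 : 3 ≤ v.length := by
        have := congrArg List.length hrep
        simp only [List.length_replicate] at this
        omega
      have : IsFactor fibWord [0, 0, 0] := by
        apply isFactor_infix _ hxfact
        rw [hrep]
        refine ⟨[], List.replicate (v.length - 3) 0, ?_⟩
        rw [List.nil_append, show [(0:ℤ),0,0] = List.replicate 3 0 from rfl,
          ← List.replicate_add]
        congr 1
        omega
      exact not_factor_000 this
  have hmpos : 0 < v.length := by omega
  have hvrotfact : ∀ k, IsFactor fibWord ((FibAux.σL v).rotate k) := by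
    intro k; rw [hσv]; exact hxrot k
  have hAllv : ∀ i, IsFactor fibWord (v.rotate i) := by
    intro i
    rw [← List.rotate_mod]
    set i' := i % v.length with hi'
    have hi'lt : i' < v.length := Nat.mod_lt _ hmpos
    set w := v.rotate i' with hwdef
    have hwval : ∀ y ∈ w, y = 0 ∨ y = 1 := fun y hy => hvval y ((List.mem_rotate).mp hy)
    have hσwrot : ∀ k j, IsFactor fibWord ((FibAux.σL (w.rotate k)).rotate j) := by
      intro k j
      obtain ⟨t1, ht1⟩ := sigma_rotate' v (i' + k)
      rw [hwdef, List.rotate_rotate, ht1, List.rotate_rotate]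
      exact hvrotfact _
    have hσw : ∀ k, IsFactor fibWord (FibAux.σL (w.rotate k)) := by
      intro k
      have := hσwrot k 0
      rwa [List.rotate_zero] at this
    have hσwlen : ∀ k, (FibAux.σL (w.rotate k)).length = u.length := by
      intro k
      obtain ⟨t1, ht1⟩ := sigma_rotate' v (i' + k)
      rw [hwdef, List.rotate_rotate, ht1, List.length_rotate, hn]
    have hwlen : w.length = v.length := List.length_rotate ..
    have hwne : w ≠ [] := by rw [← List.length_pos_iff, hwlen]; omega
    obtain ⟨c, t, hct⟩ := List.exists_cons_of_ne_nil hwne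
    show IsFactor fibWord w
    rcases hwval c (by rw [hct]; simp) with hc | hc
    · -- w = 0 :: t
      subst hc
      have h1 : IsFactor fibWord ((FibAux.σL w).rotate 1) := by
        have := hσwrot 0 1
        rwa [List.rotate_zero] at this
      rw [hct] at h1
      have hshape : (FibAux.σL ((0:ℤ) :: t)).rotate 1 = 1 :: (FibAux.σL t ++ [0]) := by
        have : FibAux.σL ((0:ℤ) :: t) = 0 :: (1 :: FibAux.σL t) := rfl
        rw [this, rotate_one_cons, List.cons_append]
      rw [hshape] at h1
      have h2 := isFactor_zero_cons h1
      have hshape2 : FibAux.σL ((0:ℤ) :: t) ++ [0] = 0 :: 1 :: (FibAux.σL t ++ [0]) := rfl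
      rw [hct]
      apply isFactor_of_sigma_zero (fun y hy => hwval y (by rw [hct]; exact hy))
      rw [hshape2]
      exact h2
    · -- w = 1 :: t
      subst hc
      have htne : t ≠ [] := by
        rintro rfl
        rw [hct] at hwlen
        simp at hwlen
        omega
      rcases List.eq_nil_or_concat t with rfl | ⟨t', d, rfl⟩
      · exact absurd rfl htne
      rw [List.concat_eq_append] at *
      have hwform : w = (1 :: t') ++ [d] := by rw [hct]; rfl
      rcases hwval d (by rw [hct]; simp) with hd | hd
      · -- last letter 0 : use R2
        have hlast : w.getLast? = some 0 := by
          rw [hwform, List.getLast?_append_cons, hd]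
          rfl
        exact isFactor_of_sigma_last hwval hlast
          (by have := hσw 0; rwa [List.rotate_zero] at this)
      · -- last letter 1 : contradiction via 000 or length
        exfalso
        subst hd
        have hrot2 : w.rotate (1 :: t').length = 1 :: 1 :: t' := by
          rw [hwform, rotate_append_length]
          rfl
        rcases eq_or_ne t' [] with rfl | ht'ne
        · -- w = [1,1] : σL w has length 2 but must be ≥ 3
          have := hσwlen 0
          rw [List.rotate_zero, hct] at this
          simp [FibAux.σL] at this
          omega
        · obtain ⟨y, hy⟩ := sigma_head
            (fun z hz => hwval z (by rw [hct]; simp [hz])) ht'ne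
          have hfact := hσw (1 :: t').length
          rw [hrot2] at hfact
          have hform : FibAux.σL ((1:ℤ) :: 1 :: t') = 0 :: 0 :: FibAux.σL t' := by
            norm_num [FibAux.σL]
          rw [hform, hy] at hfact
          exact not_factor_000 (isFactor_infix ⟨[], y, rfl⟩ hfact)
  refine ⟨v, hm2, hmlt, hAllv, ?_⟩
  rw [hσv, hxdef]
  exact (conjClass_rotate u j0).symm

-- existence: all rotations of fibIter j and its square are factors
lemma fibIter_ne_nil (j : ℕ) : fibIter j ≠ [] := by
  rw [← List.length_pos_iff, FibAux.length_fibIter]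
  exact Nat.fib_pos.mpr (by omega)

lemma allrot_fibIter (j : ℕ) : ∀ i, IsFactor fibWord ((fibIter j).rotate i) := by
  induction j with
  | zero =>
    intro i
    have : fibIter 0 = [0] := rfl
    rw [this, List.rotate_singleton]
    exact ⟨0, by decide⟩
  | succ j ih =>
    intro i
    rw [FibAux.fibIter_succ]
    exact ascent (fibIter_ne_nil j) ih i

lemma allrot_fibIter_sq (j : ℕ) :
    ∀ i, IsFactor fibWord ((fibIter j ++ fibIter j).rotate i) := by
  induction j with
  | zero =>
    intro i
    have h00 : fibIter 0 ++ fibIter 0 = [(0:ℤ), 0] := rfl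
    rw [h00, ← List.rotate_mod]
    have hf : IsFactor fibWord [(0:ℤ), 0] := ⟨2, by decide⟩
    have : i % 2 = 0 ∨ i % 2 = 1 := by omega
    rcases this with h | h
    · rw [show ([(0:ℤ),0]).length = 2 from rfl, h, List.rotate_zero]; exact hf
    · rw [show ([(0:ℤ),0]).length = 2 from rfl, h, rotate_one_cons]; exact hf
  | succ j ih =>
    intro i
    rw [FibAux.fibIter_succ, ← FibAux.σL_append]
    exact ascent (by simp [fibIter_ne_nil j]) ih i

-- fib arithmetic
lemma fib_inj {a b : ℕ} (ha : 2 ≤ a) (hb : 2 ≤ b) (h : Nat.fib a = Nat.fib b) : a = b := by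
  obtain ⟨a', rfl⟩ : ∃ a', a = a' + 2 := ⟨a - 2, by omega⟩
  obtain ⟨b', rfl⟩ : ∃ b', b = b' + 2 := ⟨b - 2, by omega⟩
  have := Nat.fib_add_two_strictMono.injective (a₁ := a') (a₂ := b') (by simpa using h)
  omega

lemma two_fib_eq {k : ℕ} (hk : 4 ≤ k) :
    2 * Nat.fib (k - 1) = Nat.fib k + Nat.fib (k - 3) := by
  obtain ⟨j, rfl⟩ : ∃ j, k = j + 4 := ⟨k - 4, by omega⟩
  have e1 : j + 4 - 1 = j + 3 := by omega
  have e2 : j + 4 - 3 = j + 1 := by omega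
  rw [e1, e2]
  have h1 := Nat.fib_add_two (n := j + 2)
  have h2 := Nat.fib_add_two (n := j + 1)
  simp only [show j + 2 + 2 = j + 4 by omega, show j + 2 + 1 = j + 3 by omega,
    show j + 1 + 2 = j + 3 by omega, show j + 1 + 1 = j + 2 by omega] at h1 h2
  omega

lemma fib_lt_two_fib {k : ℕ} (hk : 4 ≤ k) : Nat.fib k < 2 * Nat.fib (k - 1) := by
  rw [two_fib_eq hk]
  have : 0 < Nat.fib (k - 3) := Nat.fib_pos.mpr (by omega)
  omega

lemma two_fib_lt_fib {k : ℕ} (hk : 4 ≤ k) : 2 * Nat.fib (k - 1) < Nat.fib (k + 1) := by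
  rw [two_fib_eq hk]
  have h1 := Nat.fib_add_two (n := k - 1)
  simp only [show k - 1 + 2 = k + 1 by omega, show k - 1 + 1 = k by omega] at h1
  have h2 : Nat.fib (k - 3) < Nat.fib (k - 1) := by
    have h3 := Nat.fib_add_two (n := k - 3)
    simp only [show k - 3 + 2 = k - 1 by omega] at h3
    have : 0 < Nat.fib (k - 3 + 1) := Nat.fib_pos.mpr (by omega)
    omega
  omega

lemma fib_ne_two_fib {k k' : ℕ} (hk : 4 ≤ k) (hk' : 4 ≤ k') :
    Nat.fib k ≠ 2 * Nat.fib (k' - 1) := by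
  intro h
  have h1 : Nat.fib k' < Nat.fib k := h ▸ fib_lt_two_fib hk'
  have h2 : Nat.fib k < Nat.fib (k' + 1) := h ▸ two_fib_lt_fib hk'
  rcases Nat.le_total k k' with hle | hle
  · exact absurd (Nat.fib_mono hle) (by omega)
  · rcases Nat.eq_or_lt_of_le hle with rfl | hlt
    · omega
    · exact absurd (Nat.fib_mono (show k' + 1 ≤ k by omega)) (by omega)

-- classification of closed conjugacy classes
theorem classify : ∀ n : ℕ, 3 ≤ n → ∀ u : List ℤ, u.length = n →
    (∀ i, IsFactor fibWord (u.rotate i)) →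
    (∃ k, 4 ≤ k ∧ n = Nat.fib k ∧ conjClass u = conjClass (fibIter (k - 2))) ∨
    (∃ k, 4 ≤ k ∧ n = 2 * Nat.fib (k - 1) ∧
      conjClass u = conjClass (fibIter (k - 3) ++ fibIter (k - 3))) := by
  intro n
  induction n using Nat.strong_induction_on with
  | _ n ih =>
    intro h3 u hlen hA
    obtain ⟨v, hm2, hmlt, hAllv, hconj⟩ := descent (by omega) hA
    have hu : u ∈ conjClass (FibAux.σL v) := hconj ▸ mem_conjClass_self u
    obtain ⟨s, hs⟩ := hu
    have hlenσ : (FibAux.σL v).length = n := by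
      rw [← hlen, hs, List.length_rotate]
    have hvfact : IsFactor fibWord v := by
      have := hAllv 0; rwa [List.rotate_zero] at this
    have hvval := isFactor_val hvfact
    rcases Nat.eq_or_lt_of_le hm2 with h2eq | h2lt
    · -- v has length 2
      match v, h2eq, hvval, hconj, hlenσ with
      | [a, b], h2eq, hvval, hconj, hlenσ =>
      rcases hvval a (by simp) with ha | ha <;> rcases hvval b (by simp) with hb | hb <;>
        subst ha <;> subst hb
      · -- v = [0,0] : square case, n = 4
        right
        refine ⟨4, by omega, ?_, ?_⟩
        · rw [← hlenσ]; decide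
        · rw [hconj]
          have : FibAux.σL [(0:ℤ), 0] = fibIter (4 - 3) ++ fibIter (4 - 3) := rfl
          rw [this]
      · -- v = [0,1] : fib case, n = 3
        left
        refine ⟨4, by omega, ?_, ?_⟩
        · rw [← hlenσ]; decide
        · rw [hconj]
          have : FibAux.σL [(0:ℤ), 1] = fibIter (4 - 2) := rfl
          rw [this]
      · -- v = [1,0] : σL v = [0,0,1], conjugate to fibIter 2 = [0,1,0]
        left
        refine ⟨4, by omega, ?_, ?_⟩
        · rw [← hlenσ]; decide
        · rw [hconj]
          have h1 : FibAux.σL [(1:ℤ), 0] = [0, 0, 1] := rfl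
          have h2 : fibIter (4 - 2) = ([(0:ℤ), 0, 1]).rotate 1 := by decide
          rw [h1, h2, conjClass_rotate]
      · -- v = [1,1] : impossible, σL v too short
        exfalso
        have : (FibAux.σL [(1:ℤ), 1]).length = 2 := rfl
        omega
    · -- v has length ≥ 3 : induction
      rcases ih v.length (by omega) (by omega) v rfl hAllv with
        ⟨k, hk4, hmfib, hcv⟩ | ⟨k, hk4, hmfib, hcv⟩
      · -- v conjugate to fibIter (k-2)
        have hv : v ∈ conjClass (fibIter (k - 2)) := hcv ▸ mem_conjClass_self v
        obtain ⟨t, ht⟩ := hv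
        obtain ⟨t2, ht2⟩ := sigma_rotate' (fibIter (k - 2)) t
        have hst : FibAux.σL v = (fibIter (k - 1)).rotate t2 := by
          rw [ht, ht2, ← FibAux.fibIter_succ, show k - 2 + 1 = k - 1 by omega]
        left
        refine ⟨k + 1, by omega, ?_, ?_⟩
        · rw [← hlenσ, hst, List.length_rotate, FibAux.length_fibIter,
            show k - 1 + 2 = k + 1 by omega]
        · rw [hconj, hst, conjClass_rotate, show k + 1 - 2 = k - 1 by omega]
      · -- v conjugate to a square
        have hv : v ∈ conjClass (fibIter (k - 3) ++ fibIter (k - 3)) := hcv ▸ mem_conjClass_self v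
        obtain ⟨t, ht⟩ := hv
        obtain ⟨t2, ht2⟩ := sigma_rotate' (fibIter (k - 3) ++ fibIter (k - 3)) t
        have hst : FibAux.σL v = ((fibIter (k - 2)) ++ fibIter (k - 2)).rotate t2 := by
          rw [ht, ht2, FibAux.σL_append, ← FibAux.fibIter_succ, show k - 3 + 1 = k - 2 by omega]
        right
        refine ⟨k + 1, by omega, ?_, ?_⟩
        · rw [← hlenσ, hst, List.length_rotate, List.length_append, FibAux.length_fibIter,
            show k - 2 + 2 = k by omega, show k + 1 - 1 = k by omega]
          omega
        · rw [hconj, hst, conjClass_rotate, show k + 1 - 3 = k - 2 by omega]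

-- the set of closed classes of each length
def Scl (n : ℕ) : Set (Set (List ℤ)) :=
  {C : Set (List ℤ) | ∃ u : List ℤ, u.length = n ∧
    (∀ i : ℕ, IsFactor fibWord (u.rotate i)) ∧ C = conjClass u}

lemma lie_eq (n : ℕ) : lieComplexity fibWord n = (Scl n).ncard := rfl

lemma Scl_zero : Scl 0 = {conjClass ([] : List ℤ)} := by
  ext C
  simp only [Scl, Set.mem_setOf_eq, Set.mem_singleton_iff]
  constructor
  · rintro ⟨u, hlen, _, rfl⟩
    rw [List.length_eq_zero_iff.mp hlen]
  · rintro rfl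
    exact ⟨[], rfl, fun i => by rw [List.rotate_nil]; exact isFactor_nil, rfl⟩

lemma Scl_one : Scl 1 = {conjClass [0], conjClass [1]} := by
  ext C
  simp only [Scl, Set.mem_setOf_eq, Set.mem_insert_iff, Set.mem_singleton_iff]
  constructor
  · rintro ⟨u, hlen, hrot, rfl⟩
    obtain ⟨a, rfl⟩ := List.length_eq_one_iff.mp hlen
    rcases isFactor_val (by have := hrot 0; rwa [List.rotate_zero] at this) a (by simp)
      with h | h <;> subst h
    · left; rfl
    · right; rfl
  · rintro (rfl | rfl)
    · exact ⟨[0], rfl, fun i => by rw [List.rotate_singleton]; exact ⟨0, by decide⟩, rfl⟩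
    · exact ⟨[1], rfl, fun i => by rw [List.rotate_singleton]; exact ⟨1, by decide⟩, rfl⟩

lemma Scl_two : Scl 2 = {conjClass [0, 0], conjClass [0, 1]} := by
  ext C
  simp only [Scl, Set.mem_setOf_eq, Set.mem_insert_iff, Set.mem_singleton_iff]
  constructor
  · rintro ⟨u, hlen, hrot, rfl⟩
    match u, hlen, hrot with
    | [a, b], hlen, hrot =>
    have hval := isFactor_val (by have := hrot 0; rwa [List.rotate_zero] at this)
    rcases hval a (by simp) with ha | ha <;> rcases hval b (by simp) with hb | hb <;>
      subst ha <;> subst hb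
    · left; rfl
    · right; rfl
    · right
      have h1 : [(1:ℤ), 0] = ([(0:ℤ), 1]).rotate 1 := by decide
      rw [h1, conjClass_rotate]
    · exfalso
      apply not_factor_11
      have := hrot 0; rwa [List.rotate_zero] at this
  · rintro (rfl | rfl)
    · exact ⟨[0, 0], rfl, fun i => allrot_fibIter_sq 0 i, rfl⟩
    · exact ⟨[0, 1], rfl, fun i => allrot_fibIter 1 i, rfl⟩

lemma Scl_fib {n k : ℕ} (hk : 4 ≤ k) (hn : n = Nat.fib k) :
    Scl n = {conjClass (fibIter (k - 2))} := by
  have h3 : 3 ≤ n := by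
    rw [hn]
    calc 3 = Nat.fib 4 := by decide
    _ ≤ Nat.fib k := Nat.fib_mono hk
  ext C
  simp only [Scl, Set.mem_setOf_eq, Set.mem_singleton_iff]
  constructor
  · rintro ⟨u, hlen, hrot, rfl⟩
    rcases classify n h3 u hlen hrot with ⟨k', hk', hn', hc⟩ | ⟨k', hk', hn', hc⟩
    · have : k' = k := fib_inj (by omega) (by omega) (by omega)
      rw [hc, this]
    · exact absurd (hn ▸ hn') (fib_ne_two_fib hk hk')
  · rintro rfl
    refine ⟨fibIter (k - 2), ?_, allrot_fibIter _, rfl⟩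
    rw [FibAux.length_fibIter, show k - 2 + 2 = k by omega, hn]

lemma Scl_two_fib {n k : ℕ} (hk : 4 ≤ k) (hn : n = 2 * Nat.fib (k - 1)) :
    Scl n = {conjClass (fibIter (k - 3) ++ fibIter (k - 3))} := by
  have h3 : 3 ≤ n := by
    rw [hn]
    have : Nat.fib 3 ≤ Nat.fib (k - 1) := Nat.fib_mono (by omega)
    have h2 : Nat.fib 3 = 2 := by decide
    omega
  ext C
  simp only [Scl, Set.mem_setOf_eq, Set.mem_singleton_iff]
  constructor
  · rintro ⟨u, hlen, hrot, rfl⟩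
    rcases classify n h3 u hlen hrot with ⟨k', hk', hn', hc⟩ | ⟨k', hk', hn', hc⟩
    · exact absurd (hn' ▸ hn) (fib_ne_two_fib hk' hk)
    · have : k' - 1 = k - 1 := by
        apply fib_inj (by omega) (by omega)
        omega
      have hkk : k' = k := by omega
      rw [hc, hkk]
  · rintro rfl
    refine ⟨fibIter (k - 3) ++ fibIter (k - 3), ?_, allrot_fibIter_sq _, rfl⟩
    rw [List.length_append, FibAux.length_fibIter, show k - 3 + 2 = k - 1 by omega, hn]
    omega

lemma Scl_empty {n : ℕ} (h3 : 3 ≤ n)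
    (hbad : ¬ ∃ k, 4 ≤ k ∧ (n = Nat.fib k ∨ n = 2 * Nat.fib (k - 1))) :
    Scl n = ∅ := by
  ext C
  simp only [Scl, Set.mem_setOf_eq, Set.mem_empty_iff_false, iff_false]
  rintro ⟨u, hlen, hrot, rfl⟩
  rcases classify n h3 u hlen hrot with ⟨k, hk, hn, _⟩ | ⟨k, hk, hn, _⟩
  · exact hbad ⟨k, hk, Or.inl hn⟩
  · exact hbad ⟨k, hk, Or.inr hn⟩

lemma conj0_ne_conj1 : conjClass [(0:ℤ)] ≠ conjClass [(1:ℤ)] := by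
  intro h
  have h0 : [(0:ℤ)] ∈ conjClass [(0:ℤ)] := mem_conjClass_self _
  rw [h] at h0
  obtain ⟨i, hi⟩ := h0
  rw [List.rotate_singleton] at hi
  simp at hi

lemma conj00_ne_conj01 : conjClass [(0:ℤ), 0] ≠ conjClass [(0:ℤ), 1] := by
  intro h
  have h0 : [(0:ℤ), 0] ∈ conjClass [(0:ℤ), 0] := mem_conjClass_self _
  rw [h] at h0
  obtain ⟨i, hi⟩ := h0
  have h1 : (1:ℤ) ∈ ([(0:ℤ), 1]).rotate i := List.mem_rotate.mpr (by simp)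
  rw [← hi] at h1
  simp at h1

open Classical in
theorem lieComplexity_fibonacci' (n : ℕ) :
    lieComplexity fibWord n =
      if n = 1 ∨ n = 2 then 2
      else if n = 0 ∨ ∃ k : ℕ, 4 ≤ k ∧ (n = Nat.fib k ∨ n = 2 * Nat.fib (k - 1))
      then 1 else 0 := by
  by_cases h12 : n = 1 ∨ n = 2
  · rw [if_pos h12]
    rcases h12 with rfl | rfl
    · rw [lie_eq, Scl_one, Set.ncard_pair conj0_ne_conj1]
    · rw [lie_eq, Scl_two, Set.ncard_pair conj00_ne_conj01]
  · rw [if_neg h12]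
    by_cases h0 : n = 0 ∨ ∃ k : ℕ, 4 ≤ k ∧ (n = Nat.fib k ∨ n = 2 * Nat.fib (k - 1))
    · rw [if_pos h0]
      rcases h0 with rfl | ⟨k, hk, hfk | h2fk⟩
      · rw [lie_eq, Scl_zero, Set.ncard_singleton]
      · rw [lie_eq, Scl_fib hk hfk, Set.ncard_singleton]
      · rw [lie_eq, Scl_two_fib hk h2fk, Set.ncard_singleton]
    · rw [if_neg h0]
      push_neg at h0
      obtain ⟨hn0, hbad⟩ := h0
      have h3 : 3 ≤ n := by
        rcases Nat.lt_or_ge n 3 with h | h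
        · interval_cases n
          · exact absurd rfl hn0
          · exact absurd (Or.inl rfl) h12
          · exact absurd (Or.inr rfl) h12
        · exact h
      rw [lie_eq, Scl_empty h3 ?_, Set.ncard_empty]
      rintro ⟨k, hk, h⟩
      rcases h with h | h
      · exact absurd h (hbad k hk).1
      · exact absurd h (hbad k hk).2


open Classical in
/-- The Lie complexity of the Fibonacci word: `2` for `n = 1, 2`; `1` for `n = 0`,
`n = F_k` (`k ≥ 4`) and `n = 2 F_{k-1}` (`k ≥ 4`); `0` otherwise. -/
theorem lieComplexity_fibonacci (n : ℕ) :
    lieComplexity fibWord n =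
      if n = 1 ∨ n = 2 then 2
      else if n = 0 ∨ ∃ k : ℕ, 4 ≤ k ∧ (n = Nat.fib k ∨ n = 2 * Nat.fib (k - 1))
      then 1 else 0 := by
  exact lieComplexity_fibonacci' n
end
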